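/- arXiv:1309.0622 — 8 statements merged into one kernel-verified Lean document; each statement's English description precedes it below -/
import Mathlib

section
/- Let φ : [1,∞) → (0,∞) be concave, non-decreasing and differentiable with φ'(t) → 0 as t → ∞, let ε_b, ε_ν ∈ (0,1) and let M ≥ 0. Then: (a) H_φ(t) → ∞ as t → ∞, so H_φ^{-1} is defined on all of [0,∞); (b) δ_k = ε_b φ'(H_φ^{-1}(ε_b k)) → 0 as k → ∞; and (c) the series c_* = Σ_{j=1}^∞ (1 − ε_ν)^{j−1} ∏_{k=1}^{j−1} (1 + δ_k M) converges (c_* < ∞). -/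
open MeasureTheory ProbabilityTheory Filter Set Topology

noncomputable def iterKernel {X : Type*} [MeasurableSpace X]
    (P : ℕ → Kernel X X) : ℕ → Kernel X X
  | 0 => Kernel.id
  | n + 1 => (P (n + 1)).comp (iterKernel P n)

noncomputable def Hfun (φ : ℝ → ℝ) (t : ℝ) : ℝ := ∫ s in (1:ℝ)..t, (φ s)⁻¹

noncomputable def Hinv (φ : ℝ → ℝ) : ℝ → ℝ := Function.invFunOn (Hfun φ) (Set.Ici 1)

noncomputable def rate (φ : ℝ → ℝ) (εb : ℝ) (n : ℕ) : ℝ := φ (Hinv φ (εb * n)) / φ 1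

noncomputable def deltaSeq (φ : ℝ → ℝ) (εb : ℝ) (k : ℕ) : ℝ := εb * deriv φ (Hinv φ (εb * k))

noncomputable def bbar (φ : ℝ → ℝ) (εb bV : ℝ) : ℝ := 2 * bV + εb * φ 1

noncomputable def Mone (φ : ℝ → ℝ) (εb εν bV cV : ℝ) : ℝ :=
  rate φ εb 1 * (1 + 2 * rate φ εb 1 / (εb * φ 1) * ((bV + cV) / (1 - εν) - 1))

noncomputable def cstar (φ : ℝ → ℝ) (εb εν bV cV : ℝ) : ℝ :=
  ∑' j : ℕ, (1 - εν) ^ j * ∏ k ∈ Finset.Icc 1 j, (1 + deltaSeq φ εb k * Mone φ εb εν bV cV)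

noncomputable def cconst (φ : ℝ → ℝ) (εb εν bV cV : ℝ) : ℝ :=
  2 / (εb * φ 1) * (2 + bbar φ εb bV / εν +
    cstar φ εb εν bV cV * bbar φ εb bV * rate φ εb 1 * (1 + rate φ εb 1 / (εb * φ 1)))

noncomputable def Qmeas {X : Type*} [MeasurableSpace X]
    (P : ℕ → Kernel X X) (ν : ℕ → Measure X) (εν : ℝ) (k : ℕ) (x : X) : Measure X :=
  (ENNReal.ofReal (1 - εν))⁻¹ • (P k x - ENNReal.ofReal εν • ν k)

/-- Remark 2.4(i): the rate ingredients are well behaved: `H_φ(t) → ∞`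
(so `H_φ⁻¹` is defined on `[0,∞)`), `δ_k → 0`, and the series `c_*` converges. -/
theorem statement1 (φ : ℝ → ℝ)
    (hφconc : ConcaveOn ℝ (Set.Ici 1) φ)
    (hφmono : MonotoneOn φ (Set.Ici 1))
    (hφdiff : ∀ t, 1 ≤ t → DifferentiableAt ℝ φ t)
    (hφpos : ∀ t, 1 ≤ t → 0 < φ t)
    (hφderiv0 : Tendsto (deriv φ) atTop (nhds 0))
    (εb εν : ℝ) (hεb : εb ∈ Set.Ioo (0:ℝ) 1) (hεν : εν ∈ Set.Ioo (0:ℝ) 1)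
    (M : ℝ) (hM : 0 ≤ M) :
    Tendsto (Hfun φ) atTop atTop ∧
    Tendsto (fun k : ℕ => deltaSeq φ εb k) atTop (nhds 0) ∧
    Summable (fun j : ℕ =>
      (1 - εν) ^ j * ∏ k ∈ Finset.Icc 1 j, (1 + deltaSeq φ εb k * M)) := by
  obtain ⟨hεb0, hεb1⟩ := hεb
  obtain ⟨hεν0, hεν1⟩ := hεν
  have hφcont : ContinuousOn φ (Ici 1) := fun t ht =>
    (hφdiff t ht).continuousAt.continuousWithinAt
  have hφ1 : (0:ℝ) < φ 1 := hφpos 1 le_rfl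
  have hφ2 : (0:ℝ) < φ 2 := hφpos 2 (by norm_num)
  have hcontinv : ∀ t : ℝ, 1 ≤ t → ContinuousOn (fun s => (φ s)⁻¹) (Icc 1 t) := by
    intro t ht
    exact (hφcont.mono Icc_subset_Ici_self).inv₀ fun s hs => (hφpos s hs.1).ne'
  have hint : ∀ a b : ℝ, 1 ≤ a → a ≤ b → IntervalIntegrable (fun s => (φ s)⁻¹) volume a b := by
    intro a b ha hab
    apply ContinuousOn.intervalIntegrable
    rw [uIcc_of_le hab]
    exact (hcontinv b (ha.trans hab)).mono (Icc_subset_Icc ha le_rfl)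
  -- linear upper bound on φ
  have hub : ∀ s : ℝ, 1 ≤ s → φ s ≤ φ 2 * s := by
    intro s hs
    rcases le_or_gt s 2 with h2 | h2
    · calc φ s ≤ φ 2 := hφmono hs (by norm_num) h2
        _ ≤ φ 2 * s := le_mul_of_one_le_right hφ2.le hs
    · have hsec := hφconc.neg.secant_mono (a := 1) (x := 2) (y := s)
        Set.self_mem_Ici (by norm_num : (2:ℝ) ∈ Ici 1) (by simp only [mem_Ici]; linarith : s ∈ Ici 1)
        (by norm_num) (by intro h; rw [h] at h2; linarith) h2.le
      simp only [Pi.neg_apply] at hsec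
      have hs1 : (0:ℝ) < s - 1 := by linarith
      rw [div_le_div_iff₀ (by norm_num) hs1] at hsec
      have h12 : φ 1 ≤ φ 2 := hφmono Set.self_mem_Ici (by norm_num) (by norm_num)
      nlinarith [mul_le_mul_of_nonneg_right h12 hs1.le, hφ1.le]
  -- Part (a)
  have ha : Tendsto (Hfun φ) atTop atTop := by
    have hlog : Tendsto (fun t => (φ 2)⁻¹ * Real.log t) atTop atTop :=
      Real.tendsto_log_atTop.const_mul_atTop (inv_pos.2 hφ2)
    apply tendsto_atTop_mono' atTop _ hlog
    filter_upwards [eventually_ge_atTop (1:ℝ)] with t ht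
    have h1 : (φ 2)⁻¹ * Real.log t = ∫ s in (1:ℝ)..t, (φ 2)⁻¹ * s⁻¹ := by
      rw [intervalIntegral.integral_const_mul, integral_inv, div_one]
      rw [uIcc_of_le ht]
      intro h
      exact absurd h.1 (by norm_num)
    rw [h1, Hfun]
    apply intervalIntegral.integral_mono_on ht
    · apply ContinuousOn.intervalIntegrable
      rw [uIcc_of_le ht]
      exact continuousOn_const.mul (continuousOn_inv₀.mono fun s hs => by
        simp only [mem_compl_iff, mem_singleton_iff]; intro h; rw [h] at hs; exact absurd hs.1 (by norm_num))
    · exact hint 1 t le_rfl ht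
    · intro s hs
      have hs1 : (1:ℝ) ≤ s := hs.1
      have hsp : (0:ℝ) < s := by linarith
      rw [← mul_inv]
      exact inv_anti₀ (hφpos s hs1) (hub s hs1)
  -- strict monotonicity of Hfun on Ici 1
  have hHmono : StrictMonoOn (Hfun φ) (Ici 1) := by
    intro a hA b hB hab
    have hsub : Hfun φ b - Hfun φ a = ∫ s in a..b, (φ s)⁻¹ :=
      intervalIntegral.integral_interval_sub_left (hint 1 b le_rfl hB) (hint 1 a le_rfl hA)
    have hpos : 0 < ∫ s in a..b, (φ s)⁻¹ := by
      apply intervalIntegral.intervalIntegral_pos_of_pos_on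
        (hint a b hA hab.le) (fun x hx => inv_pos.2 (hφpos x (le_trans hA hx.1.le))) hab
    linarith
  -- Hfun 1 = 0
  have hH1 : Hfun φ 1 = 0 := intervalIntegral.integral_same
  -- surjectivity onto [0, ∞)
  have hsurj : ∀ y : ℝ, 0 ≤ y → ∃ x ∈ Ici (1:ℝ), Hfun φ x = y := by
    intro y hy
    obtain ⟨T, hT1, hT2⟩ := ((ha.eventually_ge_atTop y).and (eventually_ge_atTop 1)).exists
    have hcont : ContinuousOn (Hfun φ) (Icc 1 T) := by
      have := intervalIntegral.continuousOn_primitive_interval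
        (a := (1:ℝ)) (b := T) (μ := volume) (f := fun s => (φ s)⁻¹) ?_
      · rwa [uIcc_of_le hT2] at this
      · rw [uIcc_of_le hT2]
        exact (hcontinv T hT2).integrableOn_compact isCompact_Icc
    have hIVT := intermediate_value_Icc hT2 hcont
    have hymem : y ∈ Icc (Hfun φ 1) (Hfun φ T) := by
      rw [hH1]; exact ⟨hy, hT1⟩
    obtain ⟨x, hx, hxy⟩ := hIVT hymem
    exact ⟨x, hx.1, hxy⟩
  have hmemeq : ∀ y : ℝ, 0 ≤ y → Hinv φ y ∈ Ici (1:ℝ) ∧ Hfun φ (Hinv φ y) = y := by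
    intro y hy
    obtain ⟨x, hx, hxy⟩ := hsurj y hy
    exact ⟨Function.invFunOn_mem ⟨x, hx, hxy⟩, Function.invFunOn_eq ⟨x, hx, hxy⟩⟩
  -- Hinv tends to atTop
  have hHinv : Tendsto (Hinv φ) atTop atTop := by
    rw [tendsto_atTop]
    intro T
    filter_upwards [eventually_ge_atTop (max (Hfun φ (max T 1)) 0)] with y hy
    have hy0 : (0:ℝ) ≤ y := le_trans (le_max_right _ _) hy
    obtain ⟨hmem, heq⟩ := hmemeq y hy0
    have hT1 : (1:ℝ) ≤ max T 1 := le_max_right _ _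
    refine le_trans (le_max_left T 1) ?_
    by_contra h
    push_neg at h
    have := hHmono hmem hT1 h
    rw [heq] at this
    exact absurd (le_trans (le_max_left _ _) hy) (not_le.2 this)
  -- Part (b)
  have hnk : Tendsto (fun k : ℕ => εb * (k:ℝ)) atTop atTop :=
    Tendsto.const_mul_atTop hεb0 tendsto_natCast_atTop_atTop
  have hb : Tendsto (fun k : ℕ => deltaSeq φ εb k) atTop (nhds 0) := by
    have h1 : Tendsto (fun k : ℕ => deriv φ (Hinv φ (εb * k))) atTop (nhds 0) :=
      hφderiv0.comp (hHinv.comp hnk)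
    have := h1.const_mul εb
    simpa [deltaSeq] using this
  refine ⟨ha, hb, ?_⟩
  -- Part (c)
  have hδ : ∀ k : ℕ, 0 ≤ deltaSeq φ εb k := by
    intro k
    have hy0 : (0:ℝ) ≤ εb * k := by positivity
    obtain ⟨hx1, -⟩ := hmemeq _ hy0
    refine mul_nonneg hεb0.le ?_
    set x := Hinv φ (εb * k) with hxdef
    have hder := (hφdiff x hx1).hasDerivAt
    rw [hasDerivAt_iff_tendsto_slope] at hder
    have hder' : Tendsto (slope φ x) (𝓝[>] x) (𝓝 (deriv φ x)) :=
      hder.mono_left (nhdsWithin_mono x fun y hy => ne_of_gt hy)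
    refine ge_of_tendsto hder' ?_
    filter_upwards [self_mem_nhdsWithin] with y (hy : x < y)
    rw [slope_def_field]
    apply div_nonneg _ (by linarith)
    have : φ x ≤ φ y := hφmono hx1 (le_trans hx1 hy.le) hy.le
    linarith
  set f : ℕ → ℝ := fun j => (1 - εν) ^ j * ∏ k ∈ Finset.Icc 1 j, (1 + deltaSeq φ εb k * M)
    with hfdef
  have hfpos : ∀ j, 0 < f j := by
    intro j
    apply mul_pos (pow_pos (by linarith) j)
    apply Finset.prod_pos
    intro k _
    have := mul_nonneg (hδ k) hM
    linarith
  have hratio : ∀ j : ℕ, f (j + 1) = f j * ((1 - εν) * (1 + deltaSeq φ εb (j + 1) * M)) := by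
    intro j
    rw [hfdef]
    simp only
    rw [Finset.prod_Icc_succ_top (Nat.le_add_left 1 j), pow_succ]
    ring
  apply summable_of_ratio_test_tendsto_lt_one (l := 1 - εν) (by linarith)
    (Eventually.of_forall fun n => (hfpos n).ne')
  have heq : ∀ n : ℕ, ‖f (n + 1)‖ / ‖f n‖ = (1 - εν) * (1 + deltaSeq φ εb (n + 1) * M) := by
    intro n
    rw [hratio n, Real.norm_of_nonneg (hfpos n).le, Real.norm_of_nonneg]
    · exact mul_div_cancel_left₀ _ (hfpos n).ne'
    · apply mul_nonneg (hfpos n).le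
      apply mul_nonneg (by linarith)
      have := mul_nonneg (hδ (n + 1)) hM
      linarith
  simp only [heq]
  have h2 : Tendsto (fun n : ℕ => deltaSeq φ εb (n + 1) * M) atTop (nhds 0) := by
    simpa using (hb.comp (tendsto_add_atTop_nat 1)).mul_const M
  have := (h2.const_add 1).const_mul (1 - εν)
  simpa using this
end

section
/- Assume Condition (P). Then for any sequence (P_k)_{k≥1} ⊂ 𝓟 and any λ ∈ [0,1), Condition (D) holds for (P_k)_{k≥1} with the choices V(x) = V̂(x)^{1−λα}, φ(v) = (1−λα) β v^{α_λ} where α_λ = α(1−λ)/(1−λα), and with small set A_{V̂}(c_V) = {x : V̂(x) ≤ c_V}, for some constants ε_b, ε_ν ∈ (0,1) and b_V, c_V < ∞ whose values depend only on λ and on the constants and the function V̂ in Condition (P). -/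
open MeasureTheory ProbabilityTheory Filter Set

lemma tangent_rpow {a u γ : ℝ} (ha : 0 ≤ a) (hu : 0 < u) (h0 : 0 ≤ γ) (h1 : γ ≤ 1) :
    a ^ γ ≤ u ^ γ + γ * u ^ (γ - 1) * (a - u) := by
  have hau : (0:ℝ) ≤ a / u := div_nonneg ha hu.le
  have hb : (1 + (a / u - 1)) ^ γ ≤ 1 + γ * (a / u - 1) :=
    rpow_one_add_le_one_add_mul_self (by linarith) h0 h1
  have he : (1 : ℝ) + (a / u - 1) = a / u := by ring
  rw [he] at hb
  have hugγ : (0:ℝ) < u ^ γ := Real.rpow_pos_of_pos hu γ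
  have key : a ^ γ = u ^ γ * (a / u) ^ γ := by
    rw [← Real.mul_rpow hu.le hau, mul_div_cancel₀ _ hu.ne']
  have h2 : u ^ γ * (a / u) ^ γ ≤ u ^ γ * (1 + γ * (a / u - 1)) :=
    mul_le_mul_of_nonneg_left hb hugγ.le
  have h3 : u ^ (γ - 1) = u ^ γ / u := by
    rw [Real.rpow_sub hu, Real.rpow_one]
  rw [key]
  refine h2.trans_eq ?_
  rw [h3]
  field_simp

lemma integral_tangent {X : Type*} [MeasurableSpace X] (μ : Measure X) [IsProbabilityMeasure μ]
    (Vh : X → ℝ) (hVh : Measurable Vh) (h1 : ∀ x, 1 ≤ Vh x) (hint : Integrable Vh μ)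
    {γ u0 : ℝ} (hu0 : 0 < u0) (h0 : 0 ≤ γ) (hle : γ ≤ 1) :
    Integrable (fun y => Vh y ^ γ) μ ∧
    ∫ y, Vh y ^ γ ∂μ ≤ u0 ^ γ + γ * u0 ^ (γ - 1) * ((∫ y, Vh y ∂μ) - u0) := by
  have hmγ : Measurable fun y => Vh y ^ γ :=
    (Real.continuous_rpow_const h0).measurable.comp hVh
  have hintγ : Integrable (fun y => Vh y ^ γ) μ := by
    refine hint.mono' hmγ.aestronglyMeasurable (Filter.Eventually.of_forall fun y => ?_)
    have hy : (0:ℝ) ≤ Vh y := le_trans zero_le_one (h1 y)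
    rw [Real.norm_eq_abs, abs_of_nonneg (Real.rpow_nonneg hy γ)]
    calc Vh y ^ γ ≤ Vh y ^ (1:ℝ) := Real.rpow_le_rpow_of_exponent_le (h1 y) hle
      _ = Vh y := Real.rpow_one _
  refine ⟨hintγ, ?_⟩
  have hrhs : Integrable (fun y => u0 ^ γ + γ * u0 ^ (γ - 1) * (Vh y - u0)) μ :=
    (integrable_const _).add ((hint.sub (integrable_const _)).const_mul _)
  calc ∫ y, Vh y ^ γ ∂μ
      ≤ ∫ y, (u0 ^ γ + γ * u0 ^ (γ - 1) * (Vh y - u0)) ∂μ := by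
        refine integral_mono hintγ hrhs fun y => ?_
        exact tangent_rpow (le_trans zero_le_one (h1 y)) hu0 h0 hle
    _ = u0 ^ γ + γ * u0 ^ (γ - 1) * ((∫ y, Vh y ∂μ) - u0) := by
        have hi2 : Integrable (fun y => γ * u0 ^ (γ - 1) * (Vh y - u0)) μ :=
          ((hint.sub (integrable_const _)).const_mul _ :)
        rw [integral_add (integrable_const _) hi2, MeasureTheory.integral_const_mul,
          integral_sub hint (integrable_const _), integral_const]
        simp


/-- Proposition 3.3: Condition (P) implies Condition (D) for `V = V̂^{1-λα}` and
`φ(v) = (1-λα) β v^{α_λ}`, with small set `{x | V̂ x ≤ c_V}`. -/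
theorem statement5 {X : Type*} [MeasurableSpace X]
    (PP : Set (Kernel X X)) (hPP : ∀ P ∈ PP, IsMarkovKernel P)
    (C : Set X) (hC : MeasurableSet C)
    (Vh : X → ℝ) (hVh : Measurable Vh) (hVh1 : ∀ x, 1 ≤ Vh x)
    (cVh : ℝ) (hcVh : ∀ x ∈ C, Vh x ≤ cVh)
    (β : ℝ) (hβ : 0 < β) (α : ℝ) (hα : α ∈ Set.Ioo (0:ℝ) 1) (bVh : ℝ)
    (hint : ∀ P ∈ PP, ∀ x : X, Integrable Vh (P x))
    (hdriftout : ∀ P ∈ PP, ∀ x ∉ C, ∫ y, Vh y ∂(P x) ≤ Vh x - β * Vh x ^ α)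
    (hdriftin : ∀ P ∈ PP, ∀ x ∈ C, ∫ y, Vh y ∂(P x) ≤ bVh)
    (hsmall : ∀ v : ℝ, ∃ εv : ℝ, 0 < εv ∧ ∃ νP : Kernel X X → Measure X,
      (∀ P ∈ PP, IsProbabilityMeasure (νP P)) ∧
      ∀ P ∈ PP, ∀ x : X, Vh x ≤ v → ∀ A : Set X, MeasurableSet A →
        ENNReal.ofReal εv * νP P A ≤ P x A)
    (lam : ℝ) (hlam : lam ∈ Set.Ico (0:ℝ) 1) :
    ∃ εb εν : ℝ, εb ∈ Set.Ioo (0:ℝ) 1 ∧ εν ∈ Set.Ioo (0:ℝ) 1 ∧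
    ∃ bV cV : ℝ,
    ∀ P : ℕ → Kernel X X, (∀ k, 1 ≤ k → P k ∈ PP) →
    ∃ ν : ℕ → Measure X, (∀ k, IsProbabilityMeasure (ν k)) ∧
      -- Condition (D) for V = V̂^{1-λα}, φ(v) = (1-λα) β v^{α_λ}, C = {x | V̂ x ≤ c_V}:
      (Measurable fun x => Vh x ^ (1 - lam * α)) ∧
      (∀ x, 1 ≤ Vh x ^ (1 - lam * α)) ∧
      ConcaveOn ℝ (Set.Ici 1)
        (fun v : ℝ => (1 - lam * α) * β * v ^ (α * (1 - lam) / (1 - lam * α))) ∧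
      MonotoneOn
        (fun v : ℝ => (1 - lam * α) * β * v ^ (α * (1 - lam) / (1 - lam * α)))
        (Set.Ici 1) ∧
      (∀ t : ℝ, 1 ≤ t → DifferentiableAt ℝ
        (fun v : ℝ => (1 - lam * α) * β * v ^ (α * (1 - lam) / (1 - lam * α))) t) ∧
      (∀ t : ℝ, 1 ≤ t →
        0 < (1 - lam * α) * β * t ^ (α * (1 - lam) / (1 - lam * α))) ∧
      Tendsto (deriv
        (fun v : ℝ => (1 - lam * α) * β * v ^ (α * (1 - lam) / (1 - lam * α))))
        atTop (nhds 0) ∧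
      (∀ k, 1 ≤ k → ∀ x : X, Integrable (fun y => Vh y ^ (1 - lam * α)) (P k x)) ∧
      (∀ k, 1 ≤ k → ∀ x : X,
        ∫ y, Vh y ^ (1 - lam * α) ∂(P k x) ≤
          Vh x ^ (1 - lam * α)
            - (1 - lam * α) * β * (Vh x ^ (1 - lam * α)) ^ (α * (1 - lam) / (1 - lam * α))
            + bV * Set.indicator {x : X | Vh x ≤ cV} 1 x) ∧
      (∀ k, 1 ≤ k → ∀ x : X, Vh x ≤ cV → ∀ A : Set X, MeasurableSet A →
        ENNReal.ofReal εν * ν k A ≤ P k x A) ∧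
      (∀ x : X, ¬ Vh x ≤ cV →
        bV / (1 - εb) ≤
          (1 - lam * α) * β * (Vh x ^ (1 - lam * α)) ^ (α * (1 - lam) / (1 - lam * α))) ∧
      (∀ x : X, Vh x ≤ cV → Vh x ^ (1 - lam * α) ≤ cV) := by
  
  obtain ⟨hα0, hα1⟩ := hα
  obtain ⟨hlam0, hlam1⟩ := hlam
  set γ := 1 - lam * α with hγdef
  have hγpos : 0 < γ := by rw [hγdef]; nlinarith
  have hγle : γ ≤ 1 := by rw [hγdef]; nlinarith
  set q := α * (1 - lam) with hqdef
  have hqpos : 0 < q := by rw [hqdef]; nlinarith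
  set p := q / γ with hpdef
  have hppos : 0 < p := div_pos hqpos hγpos
  have hp1 : p < 1 := by
    rw [hpdef, div_lt_one hγpos, hqdef, hγdef]; nlinarith
  have hγp : γ * p = q := by
    rw [hpdef, mul_comm]; exact div_mul_cancel₀ q hγpos.ne'
  set u := max bVh 1 with hudef
  have hu1 : (1:ℝ) ≤ u := le_max_right _ _
  have hupos : (0:ℝ) < u := lt_of_lt_of_le zero_lt_one hu1
  set M := max cVh 1 with hMdef
  have hM1 : (1:ℝ) ≤ M := le_max_right _ _
  have hMpos : (0:ℝ) < M := lt_of_lt_of_le zero_lt_one hM1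
  set bV := u ^ γ + γ * β * M ^ q with hbVdef
  have hbVpos : 0 < bV := by
    rw [hbVdef]
    have h1 : (0:ℝ) < u ^ γ := Real.rpow_pos_of_pos hupos _
    have h2 : (0:ℝ) < M ^ q := Real.rpow_pos_of_pos hMpos _
    have h3 : (0:ℝ) < γ * β * M ^ q := mul_pos (mul_pos hγpos hβ) h2
    linarith
  set cV := max M ((2 * bV / (γ * β)) ^ (1/q)) with hcVdef
  have hcV1 : (1:ℝ) ≤ cV := le_trans hM1 (le_max_left _ _)
  have hcV0 : (0:ℝ) ≤ cV := by linarith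
  obtain ⟨ε, hε, νP, hνPprob, hνPmin⟩ := hsmall cV
  refine ⟨1/2, min ε (1/2), by norm_num,
    ⟨lt_min hε (by norm_num), lt_of_le_of_lt (min_le_right _ _) (by norm_num)⟩, bV, cV, ?_⟩
  intro P hP
  have hmeasγ : Measurable fun x => Vh x ^ γ :=
    (Real.continuous_rpow_const hγpos.le).measurable.comp hVh
  have hge1 : ∀ x, 1 ≤ Vh x ^ γ := fun x => by
    calc (1:ℝ) = 1 ^ γ := (Real.one_rpow _).symm
      _ ≤ Vh x ^ γ := Real.rpow_le_rpow zero_le_one (hVh1 x) hγpos.le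
  have hVpos : ∀ x, (0:ℝ) < Vh x := fun x => lt_of_lt_of_le one_pos (hVh1 x)
  have hrwV : ∀ x : X, (Vh x ^ γ) ^ p = Vh x ^ q := fun x => by
    rw [← Real.rpow_mul (hVpos x).le, hγp]
  refine ⟨fun k => νP (P (max k 1)), fun k => hνPprob _ (hP _ (le_max_right _ _)),
    hmeasγ, hge1, ?_, ?_, ?_, ?_, ?_, ?_, ?_, ?_, ?_, ?_⟩
  · -- concavity
    have h := ((Real.concaveOn_rpow hppos.le hp1.le).smul
      (show (0:ℝ) ≤ γ * β from (mul_pos hγpos hβ).le)).subset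
      (fun x (hx : x ∈ Set.Ici (1:ℝ)) => Set.mem_Ici.mpr (le_trans zero_le_one hx)) (convex_Ici 1)
    simpa [smul_eq_mul] using h
  · -- monotone
    intro a ha b hb hab
    exact mul_le_mul_of_nonneg_left
      (Real.rpow_le_rpow (le_trans zero_le_one ha) hab hppos.le) (mul_pos hγpos hβ).le
  · -- differentiable
    intro t ht
    exact (Real.differentiableAt_rpow_const_of_ne p (by linarith)).const_mul _
  · -- positive
    intro t ht
    exact mul_pos (mul_pos hγpos hβ) (Real.rpow_pos_of_pos (by linarith) p)
  · -- derivative tends to 0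
    have h0 : Tendsto (fun t : ℝ => γ * β * p * t ^ (-(1 - p))) atTop (nhds 0) := by
      have h := (tendsto_rpow_neg_atTop (show (0:ℝ) < 1 - p by linarith)).const_mul (γ * β * p)
      simpa using h
    refine Filter.Tendsto.congr' ?_ h0
    filter_upwards [eventually_gt_atTop (0:ℝ)] with t ht
    rw [deriv_const_mul _ (Real.differentiableAt_rpow_const_of_ne p ht.ne'),
      Real.deriv_rpow_const t p, show -(1 - p) = p - 1 by ring]
    ring
  · -- integrability
    intro k hk x
    haveI := hPP _ (hP k hk)
    exact (integral_tangent (P k x) Vh hVh hVh1 (hint _ (hP k hk) x)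
      (u0 := 1) one_pos hγpos.le hγle).1
  · -- drift
    intro k hk x
    haveI := hPP _ (hP k hk)
    by_cases hxC : x ∈ C
    · have hxcV : Vh x ≤ cV :=
        le_trans (hcVh x hxC) (le_trans (le_max_left cVh 1) (le_max_left M _))
      have hind : Set.indicator {x : X | Vh x ≤ cV} (1 : X → ℝ) x = 1 :=
        Set.indicator_of_mem hxcV 1
      obtain ⟨hi, hb⟩ := integral_tangent (P k x) Vh hVh hVh1 (hint _ (hP k hk) x)
        hupos hγpos.le hγle
      have hIb : ∫ y, Vh y ∂(P k x) ≤ bVh := hdriftin _ (hP k hk) x hxC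
      have hc : (0:ℝ) ≤ γ * u ^ (γ - 1) :=
        mul_nonneg hγpos.le (Real.rpow_nonneg hupos.le _)
      have hneg : γ * u ^ (γ - 1) * ((∫ y, Vh y ∂(P k x)) - u) ≤ 0 := by
        have h1 : (∫ y, Vh y ∂(P k x)) - u ≤ 0 := by
          have := le_max_left bVh (1:ℝ); rw [← hudef] at this; linarith
        have := mul_le_mul_of_nonneg_left h1 hc
        simpa using this
      have h2 : ∫ y, Vh y ^ γ ∂(P k x) ≤ u ^ γ := by linarith
      rw [hind, mul_one, hrwV]
      have hφle : γ * β * Vh x ^ q ≤ γ * β * M ^ q :=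
        mul_le_mul_of_nonneg_left
          (Real.rpow_le_rpow (hVpos x).le
            (le_trans (hcVh x hxC) (le_max_left _ _)) hqpos.le)
          (mul_pos hγpos hβ).le
      have hVγ1 : 1 ≤ Vh x ^ γ := hge1 x
      rw [hbVdef]
      linarith
    · obtain ⟨hi, hb⟩ := integral_tangent (P k x) Vh hVh hVh1 (hint _ (hP k hk) x)
        (hVpos x) hγpos.le hγle
      have hIb : ∫ y, Vh y ∂(P k x) ≤ Vh x - β * Vh x ^ α := hdriftout _ (hP k hk) x hxC
      have hc : (0:ℝ) ≤ γ * Vh x ^ (γ - 1) :=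
        mul_nonneg hγpos.le (Real.rpow_nonneg (hVpos x).le _)
      have h2 : γ * Vh x ^ (γ - 1) * ((∫ y, Vh y ∂(P k x)) - Vh x) ≤
          γ * Vh x ^ (γ - 1) * (-(β * Vh x ^ α)) :=
        mul_le_mul_of_nonneg_left (by linarith) hc
      have h3 : γ * Vh x ^ (γ - 1) * (-(β * Vh x ^ α)) = -(γ * β * Vh x ^ q) := by
        have hcomb : Vh x ^ (γ - 1) * Vh x ^ α = Vh x ^ q := by
          rw [← Real.rpow_add (hVpos x)]; congr 1; rw [hγdef, hqdef]; ring
        calc γ * Vh x ^ (γ - 1) * (-(β * Vh x ^ α))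
            = -(γ * β * (Vh x ^ (γ - 1) * Vh x ^ α)) := by ring
          _ = -(γ * β * Vh x ^ q) := by rw [hcomb]
      rw [h3] at h2
      have hind : 0 ≤ bV * Set.indicator {x : X | Vh x ≤ cV} (1 : X → ℝ) x :=
        mul_nonneg hbVpos.le (Set.indicator_nonneg (fun _ _ => zero_le_one) x)
      rw [hrwV]
      linarith
  · -- minorization
    intro k hk x hx A hA
    have h := hνPmin (P k) (hP k hk) x hx A hA
    simp only [max_eq_left hk]
    calc ENNReal.ofReal (min ε (1/2)) * νP (P k) A
        ≤ ENNReal.ofReal ε * νP (P k) A :=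
          mul_le_mul_left (ENNReal.ofReal_le_ofReal (min_le_left _ _)) _
      _ ≤ P k x A := h
  · -- lower bound outside small set
    intro x hx
    have hVx : cV < Vh x := not_le.mp hx
    have hγβ : (0:ℝ) < γ * β := mul_pos hγpos hβ
    have hbase : (0:ℝ) ≤ 2 * bV / (γ * β) := by positivity
    have h1 : 2 * bV / (γ * β) = ((2 * bV / (γ * β)) ^ (1/q)) ^ q := by
      rw [← Real.rpow_mul hbase, one_div, inv_mul_cancel₀ hqpos.ne', Real.rpow_one]
    have h2 : ((2 * bV / (γ * β)) ^ (1/q)) ^ q ≤ cV ^ q :=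
      Real.rpow_le_rpow (Real.rpow_nonneg hbase _) (le_max_right _ _) hqpos.le
    have h3 : cV ^ q ≤ Vh x ^ q := Real.rpow_le_rpow hcV0 hVx.le hqpos.le
    have h4 : 2 * bV / (γ * β) ≤ Vh x ^ q := by rw [h1]; exact h2.trans h3
    have key : 2 * bV ≤ γ * β * Vh x ^ q := by
      calc 2 * bV = γ * β * (2 * bV / (γ * β)) := by field_simp
        _ ≤ γ * β * Vh x ^ q := mul_le_mul_of_nonneg_left h4 hγβ.le
    rw [hrwV]
    have heq : bV / (1 - 1/2 : ℝ) = 2 * bV := by norm_num; ring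
    rw [heq]
    exact key
  · -- small set level bound
    intro x hx
    calc Vh x ^ γ ≤ Vh x ^ (1:ℝ) := Real.rpow_le_rpow_of_exponent_le (hVh1 x) hγle
      _ = Vh x := Real.rpow_one _
      _ ≤ cV := hx
end

section
/- Assume Condition (D). Then for all k ≥ 1 and all (x, x') ∉ C × C: P_k V(x) + P_k V(x') − 1 ≤ (V(x) + V(x') − 1) − ε_b φ(V(x) + V(x') − 1). -/
open MeasureTheory ProbabilityTheory Filter Set

lemma concave_subadd_aux {φ : ℝ → ℝ} (hc : ConcaveOn ℝ (Set.Ici 1) φ)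
    {s t : ℝ} (hs : 1 ≤ s) (ht : 1 ≤ t) :
    φ (s + t - 1) + φ 1 ≤ φ s + φ t := by
  rcases eq_or_lt_of_le hs with h | h
  · rw [← h]; ring_nf; simp
  · have hd : (0:ℝ) < s + t - 2 := by linarith
    set a : ℝ := (t - 1) / (s + t - 2) with ha_def
    have ha : 0 ≤ a := div_nonneg (by linarith) hd.le
    have hb : 0 ≤ 1 - a := by
      have : a ≤ 1 := by
        rw [ha_def, div_le_one hd]; linarith
      linarith
    have hab : a + (1 - a) = 1 := by ring
    have hmem1 : (1:ℝ) ∈ Set.Ici (1:ℝ) := Set.self_mem_Ici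
    have hmemU : s + t - 1 ∈ Set.Ici (1:ℝ) := by simp; linarith
    have e1 : a • (1:ℝ) + (1 - a) • (s + t - 1) = s := by
      simp only [smul_eq_mul, ha_def]
      field_simp
      ring
    have e2 : (1 - a) • (1:ℝ) + a • (s + t - 1) = t := by
      simp only [smul_eq_mul, ha_def]
      field_simp
      ring
    have h1 := hc.2 hmem1 hmemU ha hb hab
    have h2 := hc.2 hmem1 hmemU hb ha (by ring)
    rw [e1] at h1
    rw [e2] at h2
    simp only [smul_eq_mul] at h1 h2
    linarith

/-- Lemma 5.3 (i): bivariate drift outside `C × C`. -/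
theorem statement8 {X : Type*} [MeasurableSpace X]
    (P : ℕ → Kernel X X) (hP : ∀ k, IsMarkovKernel (P k))
    (C : Set X) (hC : MeasurableSet C)
    (V : X → ℝ) (hVmeas : Measurable V) (hV1 : ∀ x, 1 ≤ V x)
    (φ : ℝ → ℝ)
    (hφconc : ConcaveOn ℝ (Set.Ici 1) φ)
    (hφmono : MonotoneOn φ (Set.Ici 1))
    (hφdiff : ∀ t, 1 ≤ t → DifferentiableAt ℝ φ t)
    (hφpos : ∀ t, 1 ≤ t → 0 < φ t)
    (hφderiv0 : Tendsto (deriv φ) atTop (nhds 0))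
    (ν : ℕ → Measure X) (hν : ∀ k, IsProbabilityMeasure (ν k))
    (εν εb : ℝ) (hεν : εν ∈ Set.Ioo (0:ℝ) 1) (hεb : εb ∈ Set.Ioo (0:ℝ) 1)
    (bV cV : ℝ)
    (hVint : ∀ k, 1 ≤ k → ∀ x, Integrable V (P k x))
    (hdrift : ∀ k, 1 ≤ k → ∀ x,
      ∫ y, V y ∂(P k x) ≤ V x - φ (V x) + bV * C.indicator 1 x)
    (hminor : ∀ k, 1 ≤ k → ∀ x ∈ C, ∀ A : Set X, MeasurableSet A →
      ENNReal.ofReal εν * ν k A ≤ P k x A)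
    (hout : ∀ x ∉ C, bV / (1 - εb) ≤ φ (V x))
    (hin : ∀ x ∈ C, V x ≤ cV) :
    ∀ k, 1 ≤ k → ∀ x x' : X, ¬(x ∈ C ∧ x' ∈ C) →
      (∫ y, V y ∂(P k x)) + (∫ y, V y ∂(P k x')) - 1 ≤
        (V x + V x' - 1) - εb * φ (V x + V x' - 1) := by
  intro k hk x x' hnot
  have hε1 : (0:ℝ) < 1 - εb := by linarith [hεb.2]
  have hεb0 : (0:ℝ) ≤ εb := hεb.1.le
  have key : ∀ y y' : X, y ∉ C →
      (∫ v, V v ∂(P k y)) + (∫ v, V v ∂(P k y')) - 1 ≤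
        (V y + V y' - 1) - εb * φ (V y + V y' - 1) := by
    intro y y' hy
    have h1 := hdrift k hk y
    have h2 := hdrift k hk y'
    have hVy := hV1 y
    have hVy' := hV1 y'
    have hsub : φ (V y + V y' - 1) + φ 1 ≤ φ (V y) + φ (V y') :=
      concave_subadd_aux hφconc hVy hVy'
    have hφ1 : 0 < φ 1 := hφpos 1 le_rfl
    have hφy : 0 < φ (V y) := hφpos _ hVy
    have hφy' : 0 < φ (V y') := hφpos _ hVy'
    have hindy : C.indicator (1 : X → ℝ) y = 0 := indicator_of_notMem hy 1
    rw [hindy, mul_zero, add_zero] at h1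
    have hb : bV * C.indicator (1 : X → ℝ) y' ≤ (1 - εb) * (φ (V y) + φ (V y')) := by
      by_cases hy' : y' ∈ C
      · rw [indicator_of_mem hy', Pi.one_apply, mul_one]
        have hbVle : bV ≤ (1 - εb) * φ (V y) := by
          have := hout y hy
          rw [div_le_iff₀ hε1] at this
          linarith [this]
        nlinarith
      · rw [indicator_of_notMem hy', mul_zero]
        nlinarith
    have hmon : εb * φ (V y + V y' - 1) ≤ εb * (φ (V y) + φ (V y')) :=
      mul_le_mul_of_nonneg_left (by linarith) hεb0
    linarith
  rcases not_and_or.mp hnot with hx | hx'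
  · exact key x x' hx
  · have h := key x' x hx'
    rw [show V x' + V x = V x + V x' from add_comm _ _] at h
    linarith
end

section
/- Assume Condition (D). Then for all k ≥ 1 and all (x, x') ∈ X²: P_k V(x) + P_k V(x') − 1 ≤ (V(x) + V(x') − 1) − ε_b φ(V(x) + V(x') − 1) + b̄ · 1_{C×C}(x, x'), where b̄ = 2b_V + ε_b φ(1). (Equivalently, the bivariate drift P̄_k V̄(x, x', 0) ≤ V̄(x, x') − ε_b φ(V̄(x, x')) + b̄ 1_{C̄}(x, x') holds for the coupling kernel applied to V̄(x, x') = V(x) + V(x') − 1 from flag 0.) -/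
open MeasureTheory ProbabilityTheory Filter Set

lemma concave_subadd (φ : ℝ → ℝ) (h : ConcaveOn ℝ (Set.Ici 1) φ)
    (s t : ℝ) (hs : 1 ≤ s) (ht : 1 ≤ t) : φ (s + t - 1) + φ 1 ≤ φ s + φ t := by
  rcases hs.eq_or_lt with h1 | hs1
  · rw [← h1, show (1:ℝ) + t - 1 = t from by ring]; linarith
  rcases ht.eq_or_lt with h2 | ht1
  · rw [← h2, show s + (1:ℝ) - 1 = s from by ring]
  have hd : (0:ℝ) < s + t - 2 := by linarith
  have hm1 : (1:ℝ) ∈ Set.Ici (1:ℝ) := Set.mem_Ici.2 le_rfl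
  have hmst : s + t - 1 ∈ Set.Ici (1:ℝ) := Set.mem_Ici.2 (by linarith)
  have hA : ((t-1)/(s+t-2)) • φ 1 + ((s-1)/(s+t-2)) • φ (s+t-1) ≤
      φ (((t-1)/(s+t-2)) • (1:ℝ) + ((s-1)/(s+t-2)) • (s+t-1)) :=
    h.2 hm1 hmst (div_nonneg (by linarith) hd.le) (div_nonneg (by linarith) hd.le)
      (by rw [← add_div, div_eq_one_iff_eq hd.ne']; ring)
  have hB : ((s-1)/(s+t-2)) • φ 1 + ((t-1)/(s+t-2)) • φ (s+t-1) ≤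
      φ (((s-1)/(s+t-2)) • (1:ℝ) + ((t-1)/(s+t-2)) • (s+t-1)) :=
    h.2 hm1 hmst (div_nonneg (by linarith) hd.le) (div_nonneg (by linarith) hd.le)
      (by rw [← add_div, div_eq_one_iff_eq hd.ne']; ring)
  simp only [smul_eq_mul, mul_one] at hA hB
  have e1 : (t-1)/(s+t-2) + (s-1)/(s+t-2) * (s+t-1) = s := by
    rw [div_mul_eq_mul_div, ← add_div, div_eq_iff hd.ne']; ring
  have e2 : (s-1)/(s+t-2) + (t-1)/(s+t-2) * (s+t-1) = t := by
    rw [div_mul_eq_mul_div, ← add_div, div_eq_iff hd.ne']; ring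
  rw [e1] at hA
  rw [e2] at hB
  have hsum : (t-1)/(s+t-2) + (s-1)/(s+t-2) = 1 := by
    rw [← add_div, div_eq_one_iff_eq hd.ne']; ring
  have key := add_le_add hA hB
  have e3 : (t-1)/(s+t-2) * φ 1 + (s-1)/(s+t-2) * φ (s+t-1) +
      ((s-1)/(s+t-2) * φ 1 + (t-1)/(s+t-2) * φ (s+t-1)) =
      ((t-1)/(s+t-2) + (s-1)/(s+t-2)) * (φ 1 + φ (s+t-1)) := by ring
  rw [e3, hsum, one_mul] at key
  linarith

/-- Lemma 5.3 (iii): the bivariate drift inequality on all of `X × X`. -/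
theorem statement10 {X : Type*} [MeasurableSpace X]
    (P : ℕ → Kernel X X) (hP : ∀ k, IsMarkovKernel (P k))
    (C : Set X) (hC : MeasurableSet C)
    (V : X → ℝ) (hVmeas : Measurable V) (hV1 : ∀ x, 1 ≤ V x)
    (φ : ℝ → ℝ)
    (hφconc : ConcaveOn ℝ (Set.Ici 1) φ)
    (hφmono : MonotoneOn φ (Set.Ici 1))
    (hφdiff : ∀ t, 1 ≤ t → DifferentiableAt ℝ φ t)
    (hφpos : ∀ t, 1 ≤ t → 0 < φ t)
    (hφderiv0 : Tendsto (deriv φ) atTop (nhds 0))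
    (ν : ℕ → Measure X) (hν : ∀ k, IsProbabilityMeasure (ν k))
    (εν εb : ℝ) (hεν : εν ∈ Set.Ioo (0:ℝ) 1) (hεb : εb ∈ Set.Ioo (0:ℝ) 1)
    (bV cV : ℝ)
    (hVint : ∀ k, 1 ≤ k → ∀ x, Integrable V (P k x))
    (hdrift : ∀ k, 1 ≤ k → ∀ x,
      ∫ y, V y ∂(P k x) ≤ V x - φ (V x) + bV * C.indicator 1 x)
    (hminor : ∀ k, 1 ≤ k → ∀ x ∈ C, ∀ A : Set X, MeasurableSet A →
      ENNReal.ofReal εν * ν k A ≤ P k x A)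
    (hout : ∀ x ∉ C, bV / (1 - εb) ≤ φ (V x))
    (hin : ∀ x ∈ C, V x ≤ cV) :
    ∀ k, 1 ≤ k → ∀ x x' : X,
      (∫ y, V y ∂(P k x)) + (∫ y, V y ∂(P k x')) - 1 ≤
        (V x + V x' - 1) - εb * φ (V x + V x' - 1) +
          bbar φ εb bV * Set.indicator (C ×ˢ C) 1 (x, x') := by
  intro k hk x x'
  have hIx := hdrift k hk x
  have hIx' := hdrift k hk x'
  have ha := hV1 x
  have ha' := hV1 x'
  obtain ⟨hεb0, hεb1⟩ := hεb
  have hs1 : 1 ≤ V x + V x' - 1 := by linarith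
  have hsub := concave_subadd φ hφconc (V x) (V x') ha ha'
  have hφs := hφpos _ hs1
  have hφ1 := hφpos 1 le_rfl
  have hφa := hφpos _ ha
  have hφa' := hφpos _ ha'
  by_cases hx : x ∈ C <;> by_cases hx' : x' ∈ C
  · have hC2 : (x, x') ∈ C ×ˢ C := Set.mk_mem_prod hx hx'
    rw [Set.indicator_of_mem hx (1 : X → ℝ)] at hIx
    rw [Set.indicator_of_mem hx' (1 : X → ℝ)] at hIx'
    rw [Set.indicator_of_mem hC2]
    simp only [Pi.one_apply, mul_one] at *
    unfold bbar
    nlinarith [mul_le_mul_of_nonneg_left hsub hεb0.le]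
  · have hC2 : (x, x') ∉ C ×ˢ C := fun h => hx' h.2
    rw [Set.indicator_of_mem hx (1 : X → ℝ)] at hIx
    rw [Set.indicator_of_notMem hx' (1 : X → ℝ)] at hIx'
    rw [Set.indicator_of_notMem hC2]
    simp only [Pi.one_apply, mul_one, mul_zero] at *
    have hb : bV ≤ (1 - εb) * φ (V x') := by
      have h0 := hout x' hx'
      rw [div_le_iff₀ (by linarith : (0:ℝ) < 1 - εb)] at h0
      linarith
    nlinarith [mul_le_mul_of_nonneg_left hsub hεb0.le]
  · have hC2 : (x, x') ∉ C ×ˢ C := fun h => hx h.1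
    rw [Set.indicator_of_notMem hx (1 : X → ℝ)] at hIx
    rw [Set.indicator_of_mem hx' (1 : X → ℝ)] at hIx'
    rw [Set.indicator_of_notMem hC2]
    simp only [Pi.one_apply, mul_one, mul_zero] at *
    have hb : bV ≤ (1 - εb) * φ (V x) := by
      have h0 := hout x hx
      rw [div_le_iff₀ (by linarith : (0:ℝ) < 1 - εb)] at h0
      linarith
    nlinarith [mul_le_mul_of_nonneg_left hsub hεb0.le]
  · have hC2 : (x, x') ∉ C ×ˢ C := fun h => hx h.1
    rw [Set.indicator_of_notMem hx (1 : X → ℝ)] at hIx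
    rw [Set.indicator_of_notMem hx' (1 : X → ℝ)] at hIx'
    rw [Set.indicator_of_notMem hC2]
    simp only [mul_zero] at *
    nlinarith [mul_le_mul_of_nonneg_left hsub hεb0.le]
end

section
/- Let φ : [1,∞) → (0,∞) be concave, non-decreasing and differentiable, let ε_b ∈ (0,1), and assume H_φ(t) → ∞ as t → ∞ (so H_φ^{-1} is defined on [0,∞)). Then the sequence r(n) = φ(H_φ^{-1}(ε_b n))/φ(1) is non-decreasing and log-subadditive: r(n + m) ≤ r(n) · r(m) for all n, m ≥ 0. -/
open MeasureTheory ProbabilityTheory Filter Set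
open Topology

/-- Lemma 5.4 (i): the rate sequence is non-decreasing and log-subadditive. -/
theorem statement12 (φ : ℝ → ℝ)
    (hφconc : ConcaveOn ℝ (Set.Ici 1) φ)
    (hφmono : MonotoneOn φ (Set.Ici 1))
    (hφdiff : ∀ t, 1 ≤ t → DifferentiableAt ℝ φ t)
    (hφpos : ∀ t, 1 ≤ t → 0 < φ t)
    (hH : Tendsto (Hfun φ) atTop atTop)
    (εb : ℝ) (hεb : εb ∈ Set.Ioo (0:ℝ) 1) :
    Monotone (fun n : ℕ => rate φ εb n) ∧
    ∀ n m : ℕ, rate φ εb (n + m) ≤ rate φ εb n * rate φ εb m := by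
  obtain ⟨hεb0, _⟩ := hεb
  have hφc : ∀ t : ℝ, 1 ≤ t → ContinuousAt φ t := fun t ht => (hφdiff t ht).continuousAt
  have hiC : ∀ t : ℝ, 1 ≤ t → ContinuousAt (fun s => (φ s)⁻¹) t :=
    fun t ht => ((hφc t ht).inv₀ (hφpos t ht).ne')
  have hiCOn : ContinuousOn (fun s => (φ s)⁻¹) (Set.Ici 1) :=
    fun t ht => (hiC t ht).continuousWithinAt
  have hInt : ∀ a b : ℝ, 1 ≤ a → 1 ≤ b → IntervalIntegrable (fun s => (φ s)⁻¹) volume a b := by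
    intro a b ha hb
    apply (hiCOn.mono ?_).intervalIntegrable
    intro x hx
    exact le_trans (le_min ha hb) hx.1
  have hHsub : ∀ a b : ℝ, 1 ≤ a → 1 ≤ b → Hfun φ b - Hfun φ a = ∫ s in a..b, (φ s)⁻¹ := by
    intro a b ha hb
    have h := intervalIntegral.integral_add_adjacent_intervals (hInt 1 a le_rfl ha)
      (hInt a b ha hb)
    simp only [Hfun]
    linarith
  have hSM : StrictMonoOn (Hfun φ) (Set.Ici 1) := by
    intro a ha b hb hab
    have hpos : 0 < ∫ s in a..b, (φ s)⁻¹ :=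
      intervalIntegral.intervalIntegral_pos_of_pos_on (hInt a b ha hb)
        (fun x hx => inv_pos.2 (hφpos x (le_trans ha hx.1.le))) hab
    have h := hHsub a b ha hb
    linarith
  have hH1 : Hfun φ 1 = 0 := by simp [Hfun]
  have hsurj : ∀ u : ℝ, 0 ≤ u → ∃ t ∈ Set.Ici (1:ℝ), Hfun φ t = u := by
    intro u hu
    obtain ⟨T, hT1, hTu⟩ : ∃ T : ℝ, 1 ≤ T ∧ u ≤ Hfun φ T := by
      obtain ⟨T, hT⟩ := ((hH.eventually_ge_atTop u).and (eventually_ge_atTop 1)).exists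
      exact ⟨T, hT.2, hT.1⟩
    have hcont : ContinuousOn (Hfun φ) (Set.Icc 1 T) := by
      have h := intervalIntegral.continuousOn_primitive_interval'
        (hInt 1 T le_rfl hT1) Set.left_mem_uIcc
      rwa [Set.uIcc_of_le hT1] at h
    obtain ⟨t, ht, htu⟩ := intermediate_value_Icc hT1 hcont ⟨by rw [hH1]; exact hu, hTu⟩
    exact ⟨t, ht.1, htu⟩
  have hHinv_eq : ∀ u : ℝ, 0 ≤ u → Hfun φ (Hinv φ u) = u := by
    intro u hu
    exact Function.invFunOn_eq (hsurj u hu)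
  have hHinv_mem : ∀ u : ℝ, 0 ≤ u → 1 ≤ Hinv φ u := by
    intro u hu
    exact Function.invFunOn_mem (hsurj u hu)
  have hHinv_left : ∀ t : ℝ, 1 ≤ t → Hinv φ (Hfun φ t) = t := by
    intro t ht
    have h0 : 0 ≤ Hfun φ t := by
      rcases eq_or_lt_of_le ht with h | h
      · rw [← h, hH1]
      · have := hSM (Set.mem_Ici.mpr le_rfl) (Set.mem_Ici.mpr ht) h
        linarith [hH1]
    exact hSM.injOn (hHinv_mem _ h0) ht (hHinv_eq _ h0)
  have hHinv0 : Hinv φ 0 = 1 := by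
    have h := hHinv_left 1 le_rfl
    rwa [hH1] at h
  have hHinv_mono : ∀ u v : ℝ, 0 ≤ u → u ≤ v → Hinv φ u ≤ Hinv φ v := by
    intro u v hu huv
    by_contra h
    push_neg at h
    have h2 := hSM (hHinv_mem v (hu.trans huv)) (hHinv_mem u hu) h
    rw [hHinv_eq u hu, hHinv_eq v (hu.trans huv)] at h2
    linarith
  have hHinv_smono : ∀ u v : ℝ, 0 ≤ u → u < v → Hinv φ u < Hinv φ v := by
    intro u v hu huv
    rcases lt_or_eq_of_le (hHinv_mono u v hu huv.le) with h | h
    · exact h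
    · exfalso
      have h2 := congrArg (Hfun φ) h
      rw [hHinv_eq u hu, hHinv_eq v (hu.trans huv.le)] at h2
      linarith
  have hHinv_gt1 : ∀ u : ℝ, 0 < u → 1 < Hinv φ u := by
    intro u hu
    have h := hHinv_smono 0 u le_rfl hu
    rwa [hHinv0] at h
  have hHinvSM : StrictMonoOn (Hinv φ) (Set.Ici 0) :=
    fun u hu v _ huv => hHinv_smono u v hu huv
  have himage : ∀ y : ℝ, 1 < y → ∃ u ∈ Set.Ici (0:ℝ), Hinv φ u = y := by
    intro y hy
    refine ⟨Hfun φ y, ?_, hHinv_left y hy.le⟩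
    have h := hSM (Set.mem_Ici.mpr le_rfl) (Set.mem_Ici.mpr hy.le) hy
    rw [hH1] at h
    exact h.le
  have hHinvCA : ∀ u : ℝ, 0 < u → ContinuousAt (Hinv φ) u := by
    intro u hu
    apply hHinvSM.continuousAt_of_image_mem_nhds (Ici_mem_nhds hu)
    apply mem_of_superset (Ioi_mem_nhds (hHinv_gt1 u hu))
    intro y hy
    obtain ⟨w, hw, hwy⟩ := himage y hy
    exact ⟨w, hw, hwy⟩
  have hHinvContOn : ContinuousOn (Hinv φ) (Set.Ici 0) := by
    intro u hu
    rcases eq_or_lt_of_le (Set.mem_Ici.mp hu) with h | h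
    · rw [← h]
      apply hHinvSM.continuousWithinAt_right_of_surjOn self_mem_nhdsWithin
      intro y hy
      rw [hHinv0] at hy
      obtain ⟨w, hw, hwy⟩ := himage y hy
      exact ⟨w, hw, hwy⟩
    · exact (hHinvCA u h).continuousWithinAt
  have hHderiv : ∀ t : ℝ, 1 < t → HasDerivAt (Hfun φ) (φ t)⁻¹ t := by
    intro t ht
    have hmeas : StronglyMeasurableAtFilter (fun s => (φ s)⁻¹) (𝓝 t) volume :=
      ContinuousAt.stronglyMeasurableAtFilter isOpen_Ioi
        (fun x hx => hiC x (le_of_lt hx)) t ht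
    exact intervalIntegral.integral_hasDerivAt_right (hInt 1 t le_rfl ht.le) hmeas (hiC t ht.le)
  have hHinvDeriv : ∀ u : ℝ, 0 < u → HasDerivAt (Hinv φ) (φ (Hinv φ u)) u := by
    intro u hu
    have ht : 1 < Hinv φ u := hHinv_gt1 u hu
    have hfg : ∀ᶠ y in 𝓝 u, Hfun φ (Hinv φ y) = y :=
      eventually_of_mem (Ioi_mem_nhds hu) fun y hy => hHinv_eq y (le_of_lt hy)
    have h := HasDerivAt.of_local_left_inverse (hHinvCA u hu) (hHderiv _ ht)
      (inv_ne_zero (hφpos _ ht.le).ne') hfg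
    simpa using h
  have hgDeriv : ∀ v : ℝ, 0 ≤ v → ∀ u : ℝ, 0 < u →
      HasDerivAt (fun x => Real.log (φ (Hinv φ (x + v)))) (deriv φ (Hinv φ (u + v))) u := by
    intro v hv u hu
    have huv : 0 < u + v := by linarith
    have ht : 1 < Hinv φ (u + v) := hHinv_gt1 _ huv
    have h1 : HasDerivAt (fun x : ℝ => x + v) 1 u := (hasDerivAt_id u).add_const v
    have h2 : HasDerivAt (fun x : ℝ => Hinv φ (x + v)) (φ (Hinv φ (u + v)) * 1) u :=
      (hHinvDeriv (u + v) huv).comp u h1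
    have h3 : HasDerivAt (fun x : ℝ => φ (Hinv φ (x + v)))
        (deriv φ (Hinv φ (u + v)) * (φ (Hinv φ (u + v)) * 1)) u :=
      ((hφdiff _ ht.le).hasDerivAt).comp u h2
    have h4 := h3.log (ne_of_gt (hφpos _ ht.le))
    convert h4 using 1
    rw [mul_one, mul_div_assoc, div_self (hφpos _ ht.le).ne', mul_one]
  have hLcont : ∀ w : ℝ, 0 ≤ w →
      ContinuousOn (fun x => Real.log (φ (Hinv φ (x + w)))) (Set.Ici 0) := by
    intro w hw x hx
    have hx0 : (0:ℝ) ≤ x := hx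
    have hxw : (0:ℝ) ≤ x + w := by linarith
    have h1 : ContinuousWithinAt (fun y : ℝ => y + w) (Set.Ici 0) x :=
      (continuous_add_right w).continuousWithinAt
    have h12 : ContinuousWithinAt ((Hinv φ) ∘ (fun y : ℝ => y + w)) (Set.Ici 0) x :=
      ContinuousWithinAt.comp (hHinvContOn _ hxw) h1
        (fun y hy => by
          have h0y : (0:ℝ) ≤ y := hy
          exact Set.mem_Ici.mpr (by linarith))
    have h3 : ContinuousAt φ (Hinv φ (x + w)) := hφc _ (hHinv_mem _ hxw)
    have h4 : ContinuousAt Real.log (φ (Hinv φ (x + w))) :=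
      Real.continuousAt_log (ne_of_gt (hφpos _ (hHinv_mem _ hxw)))
    have h13 : ContinuousWithinAt (φ ∘ ((Hinv φ) ∘ (fun y : ℝ => y + w))) (Set.Ici 0) x :=
      ContinuousAt.comp_continuousWithinAt (f := (Hinv φ) ∘ (fun y : ℝ => y + w)) h3 h12
    have h14 : ContinuousWithinAt (Real.log ∘ (φ ∘ ((Hinv φ) ∘ (fun y : ℝ => y + w))))
        (Set.Ici 0) x :=
      ContinuousAt.comp_continuousWithinAt (f := φ ∘ ((Hinv φ) ∘ (fun y : ℝ => y + w))) h4 h13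
    exact h14
  have key : ∀ v : ℝ, 0 < v → ∀ u : ℝ, 0 ≤ u →
      Real.log (φ (Hinv φ (u + v))) - Real.log (φ (Hinv φ u)) ≤
      Real.log (φ (Hinv φ v)) - Real.log (φ 1) := by
    intro v hv u hu
    have hFcont : ContinuousOn
        (fun x => Real.log (φ (Hinv φ (x + v))) - Real.log (φ (Hinv φ x))) (Set.Ici 0) := by
      have h0 := hLcont 0 le_rfl
      simp only [add_zero] at h0
      exact (hLcont v hv.le).sub h0
    have hFanti : AntitoneOn
        (fun x => Real.log (φ (Hinv φ (x + v))) - Real.log (φ (Hinv φ x))) (Set.Ici 0) := by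
      apply antitoneOn_of_deriv_nonpos (convex_Ici 0) hFcont
      · intro x hx
        rw [interior_Ici] at hx
        have hd0 := hgDeriv 0 le_rfl x hx
        simp only [add_zero] at hd0
        exact ((hgDeriv v hv.le x hx).sub hd0).differentiableAt.differentiableWithinAt
      · intro x hx
        rw [interior_Ici] at hx
        have hx0 : (0:ℝ) < x := hx
        have hd0 := hgDeriv 0 le_rfl x hx
        simp only [add_zero] at hd0
        have hd := (hgDeriv v hv.le x hx).sub hd0
        have hd' : HasDerivAt (fun x => Real.log (φ (Hinv φ (x + v))) - Real.log (φ (Hinv φ x)))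
          (deriv φ (Hinv φ (x + v)) - deriv φ (Hinv φ x)) x := hd
        rw [hd'.deriv]
        have hmono := hφconc.antitoneOn_deriv hφdiff
          (Set.mem_Ici.mpr (hHinv_mem x hx0.le))
          (Set.mem_Ici.mpr (hHinv_mem (x + v) (by linarith)))
          (hHinv_mono x (x + v) hx0.le (by linarith))
        linarith
    have h := hFanti (Set.mem_Ici.mpr le_rfl) (Set.mem_Ici.mpr hu) hu
    simp only [zero_add, hHinv0] at h
    exact h
  have hrate_mono : Monotone (fun n : ℕ => rate φ εb n) := by
    intro n m hnm
    simp only [rate]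
    have hn0 : (0:ℝ) ≤ εb * n := by positivity
    have hle : εb * (n:ℝ) ≤ εb * m :=
      mul_le_mul_of_nonneg_left (Nat.cast_le.mpr hnm) hεb0.le
    have h1 : φ (Hinv φ (εb * n)) ≤ φ (Hinv φ (εb * m)) :=
      hφmono (Set.mem_Ici.mpr (hHinv_mem _ hn0))
        (Set.mem_Ici.mpr (hHinv_mem _ (hn0.trans hle)))
        (hHinv_mono _ _ hn0 hle)
    have hp1 := hφpos 1 le_rfl
    gcongr
  refine ⟨hrate_mono, ?_⟩
  intro n m
  have hrate0 : rate φ εb 0 = 1 := by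
    simp [rate, hHinv0, (hφpos 1 le_rfl).ne']
  rcases Nat.eq_zero_or_pos n with rfl | hn
  · rw [zero_add, hrate0, one_mul]
  rcases Nat.eq_zero_or_pos m with rfl | hm
  · rw [add_zero, hrate0, mul_one]
  have hu : (0:ℝ) < εb * n := by positivity
  have hv : (0:ℝ) < εb * m := by positivity
  have hkey := key (εb * m) hv (εb * n) hu.le
  have hp1 : (0:ℝ) < φ 1 := hφpos 1 le_rfl
  have hpuv : (0:ℝ) < φ (Hinv φ (εb * n + εb * m)) := hφpos _ (hHinv_mem _ (by positivity))
  have hpu : (0:ℝ) < φ (Hinv φ (εb * n)) := hφpos _ (hHinv_mem _ hu.le)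
  have hpv : (0:ℝ) < φ (Hinv φ (εb * m)) := hφpos _ (hHinv_mem _ hv.le)
  have h1 : φ (Hinv φ (εb * n + εb * m)) * φ 1 ≤ φ (Hinv φ (εb * n)) * φ (Hinv φ (εb * m)) := by
    rw [← Real.log_le_log_iff (by positivity) (by positivity),
      Real.log_mul hpuv.ne' hp1.ne', Real.log_mul hpu.ne' hpv.ne']
    linarith
  simp only [rate]
  have hc : εb * ((n : ℕ) + (m : ℕ) : ℕ) = εb * n + εb * m := by
    push_cast
    ring
  rw [hc, div_mul_div_comm, div_le_div_iff₀ hp1 (by positivity)]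
  nlinarith
end

section
/- Let φ : [1,∞) → (0,∞) be concave, non-decreasing and differentiable, let ε_b ∈ (0,1), and assume H_φ(t) → ∞ as t → ∞ (so H_φ^{-1} is defined on [0,∞)). Then the sequence r(n) = φ(H_φ^{-1}(ε_b n))/φ(1) satisfies, for all n, m ≥ 0: r(n + m) − r(n) ≤ ε_b · φ'(H_φ^{-1}(ε_b n)) · r(n) · Σ_{k=1}^{m} r(k). -/
open MeasureTheory ProbabilityTheory Filter Set Topology intervalIntegral

section AuxLemmas
variable {φ : ℝ → ℝ}

lemma auxCont (hφdiff : ∀ t, 1 ≤ t → DifferentiableAt ℝ φ t) : ContinuousOn φ (Ici 1) :=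
  fun t ht => (hφdiff t ht).continuousAt.continuousWithinAt

lemma auxInt (hφdiff : ∀ t, 1 ≤ t → DifferentiableAt ℝ φ t) (hφpos : ∀ t, 1 ≤ t → 0 < φ t)
    {x y : ℝ} (hx : 1 ≤ x) (hxy : x ≤ y) :
    IntervalIntegrable (fun s => (φ s)⁻¹) volume x y := by
  apply ContinuousOn.intervalIntegrable
  have hsub : uIcc x y ⊆ Ici 1 := by
    rw [uIcc_of_le hxy]; exact fun s hs => le_trans hx hs.1
  exact ContinuousOn.inv₀ ((auxCont hφdiff).mono hsub)
    (fun s hs => (hφpos s (hsub hs)).ne')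

lemma auxHsub (hφdiff : ∀ t, 1 ≤ t → DifferentiableAt ℝ φ t) (hφpos : ∀ t, 1 ≤ t → 0 < φ t)
    {x y : ℝ} (hx : 1 ≤ x) (hxy : x ≤ y) :
    Hfun φ y - Hfun φ x = ∫ s in x..y, (φ s)⁻¹ := by
  have h1 : IntervalIntegrable (fun s => (φ s)⁻¹) volume 1 x := auxInt hφdiff hφpos le_rfl hx
  have h2 : IntervalIntegrable (fun s => (φ s)⁻¹) volume x y := auxInt hφdiff hφpos hx hxy
  have := integral_add_adjacent_intervals h1 h2
  unfold Hfun
  linarith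

lemma auxSM (hφdiff : ∀ t, 1 ≤ t → DifferentiableAt ℝ φ t) (hφpos : ∀ t, 1 ≤ t → 0 < φ t) :
    StrictMonoOn (Hfun φ) (Ici 1) := by
  intro x hx y hy hxy
  have key : 0 < ∫ s in x..y, (φ s)⁻¹ := by
    apply intervalIntegral_pos_of_pos_on (auxInt hφdiff hφpos hx hxy.le) _ hxy
    intro s hs
    exact inv_pos.mpr (hφpos s (le_trans hx hs.1.le))
  have := auxHsub hφdiff hφpos hx hxy.le
  linarith

lemma auxH1 : Hfun φ 1 = 0 := intervalIntegral.integral_same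

lemma auxHcont (hφdiff : ∀ t, 1 ≤ t → DifferentiableAt ℝ φ t) (hφpos : ∀ t, 1 ≤ t → 0 < φ t)
    {b : ℝ} (hb : 1 ≤ b) : ContinuousOn (Hfun φ) (Icc 1 b) := by
  have : IntegrableOn (fun s => (φ s)⁻¹) (uIcc 1 b) volume := by
    rw [uIcc_of_le hb]
    apply ContinuousOn.integrableOn_Icc
    exact ContinuousOn.inv₀ ((auxCont hφdiff).mono (fun s hs => hs.1))
      (fun s hs => (hφpos s hs.1).ne')
  have h := intervalIntegral.continuousOn_primitive_interval (f := fun s => (φ s)⁻¹) (a := 1) (b := b) (μ := volume) this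
  rw [uIcc_of_le hb] at h
  exact h

lemma auxSurj (hφdiff : ∀ t, 1 ≤ t → DifferentiableAt ℝ φ t) (hφpos : ∀ t, 1 ≤ t → 0 < φ t)
    (hH : Tendsto (Hfun φ) atTop atTop) {u : ℝ} (hu : 0 ≤ u) :
    ∃ t ∈ Ici (1:ℝ), Hfun φ t = u := by
  obtain ⟨b, hb⟩ := ((hH.eventually_ge_atTop u).and (eventually_ge_atTop 1)).exists
  have : u ∈ Icc (Hfun φ 1) (Hfun φ b) := ⟨by rw [auxH1]; exact hu, hb.1⟩
  obtain ⟨t, ht, hteq⟩ := intermediate_value_Icc hb.2 (auxHcont hφdiff hφpos hb.2) this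
  exact ⟨t, ht.1, hteq⟩

lemma auxInvMem (hφdiff : ∀ t, 1 ≤ t → DifferentiableAt ℝ φ t) (hφpos : ∀ t, 1 ≤ t → 0 < φ t)
    (hH : Tendsto (Hfun φ) atTop atTop) {u : ℝ} (hu : 0 ≤ u) :
    Hinv φ u ∈ Ici (1:ℝ) ∧ Hfun φ (Hinv φ u) = u := by
  obtain ⟨t, ht, hteq⟩ := auxSurj hφdiff hφpos hH hu
  exact ⟨Function.invFunOn_mem ⟨t, ht, hteq⟩, Function.invFunOn_eq ⟨t, ht, hteq⟩⟩

lemma auxInv0 (hφdiff : ∀ t, 1 ≤ t → DifferentiableAt ℝ φ t) (hφpos : ∀ t, 1 ≤ t → 0 < φ t)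
    (hH : Tendsto (Hfun φ) atTop atTop) : Hinv φ 0 = 1 := by
  obtain ⟨hmem, heq⟩ := auxInvMem hφdiff hφpos hH (le_refl (0:ℝ))
  exact (auxSM hφdiff hφpos).injOn hmem (self_mem_Ici) (by rw [heq, auxH1])

lemma auxInvMono (hφdiff : ∀ t, 1 ≤ t → DifferentiableAt ℝ φ t) (hφpos : ∀ t, 1 ≤ t → 0 < φ t)
    (hH : Tendsto (Hfun φ) atTop atTop) {u v : ℝ} (hu : 0 ≤ u) (huv : u ≤ v) :
    Hinv φ u ≤ Hinv φ v := by
  obtain ⟨hmu, hequ⟩ := auxInvMem hφdiff hφpos hH hu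
  obtain ⟨hmv, heqv⟩ := auxInvMem hφdiff hφpos hH (hu.trans huv)
  by_contra h
  push_neg at h
  have := auxSM hφdiff hφpos hmv hmu h
  rw [hequ, heqv] at this
  linarith

lemma auxInvStrict (hφdiff : ∀ t, 1 ≤ t → DifferentiableAt ℝ φ t) (hφpos : ∀ t, 1 ≤ t → 0 < φ t)
    (hH : Tendsto (Hfun φ) atTop atTop) {u v : ℝ} (hu : 0 ≤ u) (huv : u < v) :
    Hinv φ u < Hinv φ v := by
  rcases lt_or_eq_of_le (auxInvMono hφdiff hφpos hH hu huv.le) with h | h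
  · exact h
  · exfalso
    have h1 := (auxInvMem hφdiff hφpos hH hu).2
    have h2 := (auxInvMem hφdiff hφpos hH (hu.trans huv.le)).2
    rw [h] at h1; rw [h1] at h2; linarith

/-- Increment bound: Hinv v - Hinv u ≤ (v-u) * φ (Hinv v). -/
lemma auxIncr (hφmono : MonotoneOn φ (Set.Ici 1))
    (hφdiff : ∀ t, 1 ≤ t → DifferentiableAt ℝ φ t) (hφpos : ∀ t, 1 ≤ t → 0 < φ t)
    (hH : Tendsto (Hfun φ) atTop atTop) {u v : ℝ} (hu : 0 ≤ u) (huv : u ≤ v) :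
    Hinv φ v - Hinv φ u ≤ (v - u) * φ (Hinv φ v) := by
  obtain ⟨hmu, hequ⟩ := auxInvMem hφdiff hφpos hH hu
  obtain ⟨hmv, heqv⟩ := auxInvMem hφdiff hφpos hH (hu.trans huv)
  set x := Hinv φ u
  set y := Hinv φ v
  have hxy : x ≤ y := auxInvMono hφdiff hφpos hH hu huv
  have hφy : 0 < φ y := hφpos y hmv
  have key : (y - x) * (φ y)⁻¹ ≤ v - u := by
    have h1 : ∫ s in x..y, (φ y)⁻¹ ≤ ∫ s in x..y, (φ s)⁻¹ := by
      apply intervalIntegral.integral_mono_on hxy intervalIntegrable_const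
        (auxInt hφdiff hφpos hmu hxy)
      intro s hs
      exact inv_anti₀ (hφpos s (le_trans hmu hs.1))
        (hφmono (le_trans hmu hs.1) hmv hs.2)
    rw [intervalIntegral.integral_const, smul_eq_mul] at h1
    have h2 := auxHsub hφdiff hφpos hmu hxy
    rw [hequ, heqv] at h2
    linarith
  calc y - x = (y - x) * (φ y)⁻¹ * φ y := by field_simp
    _ ≤ (v - u) * φ y := by
        apply mul_le_mul_of_nonneg_right key hφy.le

/-- Secant slopes of a concave function are antitone in the moving point. -/
lemma auxSecant (hφconc : ConcaveOn ℝ (Set.Ici 1) φ) {a x y : ℝ} (ha : a ∈ Ici (1:ℝ))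
    (hx : x ∈ Ici (1:ℝ)) (hy : y ∈ Ici (1:ℝ)) (hxa : x ≠ a) (hya : y ≠ a) (hxy : x ≤ y) :
    (φ y - φ a) / (y - a) ≤ (φ x - φ a) / (x - a) := by
  have := hφconc.neg.secant_mono ha hx hy hxa hya hxy
  simp only [Pi.neg_apply] at this
  have e1 : (-φ x - -φ a) / (x - a) = -((φ x - φ a) / (x - a)) := by ring
  have e2 : (-φ y - -φ a) / (y - a) = -((φ y - φ a) / (y - a)) := by ring
  rw [e1, e2] at this
  linarith

/-- Tangent above chord: for concave differentiable φ, slope(a,y) ≤ deriv φ a. -/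
lemma auxSlopeLe (hφconc : ConcaveOn ℝ (Set.Ici 1) φ)
    (hφdiff : ∀ t, 1 ≤ t → DifferentiableAt ℝ φ t)
    {a y : ℝ} (ha : 1 ≤ a) (hay : a < y) :
    φ y - φ a ≤ deriv φ a * (y - a) := by
  have hd : Tendsto (slope φ a) (𝓝[>] a) (𝓝 (deriv φ a)) :=
    ((hasDerivAt_iff_tendsto_slope).mp (hφdiff a ha).hasDerivAt).mono_left
      (nhdsWithin_mono a (fun s hs => ne_of_gt hs))
  have hev : ∀ᶠ s in 𝓝[>] a, (φ y - φ a) / (y - a) ≤ slope φ a s := by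
    filter_upwards [Ioo_mem_nhdsGT_of_mem (Set.left_mem_Ico.mpr hay)] with s hs
    rw [slope_def_field]
    exact auxSecant hφconc ha (mem_Ici.mpr (le_of_lt (lt_of_le_of_lt ha hs.1)))
      (mem_Ici.mpr (ha.trans hay.le)) (ne_of_gt hs.1) (ne_of_gt hay) hs.2.le
  have := ge_of_tendsto hd hev
  have hya : 0 < y - a := by linarith
  calc φ y - φ a = (φ y - φ a) / (y - a) * (y - a) := by field_simp
    _ ≤ deriv φ a * (y - a) := mul_le_mul_of_nonneg_right this hya.le

/-- Tangent above chord, other side: deriv φ y * (y - x) ≤ φ y - φ x. -/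
lemma auxSlopeGe (hφconc : ConcaveOn ℝ (Set.Ici 1) φ)
    (hφdiff : ∀ t, 1 ≤ t → DifferentiableAt ℝ φ t)
    {x y : ℝ} (hx : 1 ≤ x) (hxy : x < y) :
    deriv φ y * (y - x) ≤ φ y - φ x := by
  have hy : 1 ≤ y := hx.trans hxy.le
  have hd : Tendsto (slope φ y) (𝓝[<] y) (𝓝 (deriv φ y)) :=
    ((hasDerivAt_iff_tendsto_slope).mp (hφdiff y hy).hasDerivAt).mono_left
      (nhdsWithin_mono y (fun s hs => ne_of_lt hs))
  have hev : ∀ᶠ s in 𝓝[<] y, slope φ y s ≤ (φ x - φ y) / (x - y) := by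
    filter_upwards [Ioo_mem_nhdsLT_of_mem (Set.right_mem_Ioc.mpr hxy)] with s hs
    rw [slope_def_field]
    exact auxSecant hφconc (mem_Ici.mpr hy) (mem_Ici.mpr hx)
      (mem_Ici.mpr (hx.trans hs.1.le)) (ne_of_lt hxy) (ne_of_lt hs.2) hs.1.le
  have h1 := le_of_tendsto hd hev
  have hxy' : 0 < y - x := by linarith
  have h2 : (φ x - φ y) / (x - y) = (φ y - φ x) / (y - x) := by
    rw [div_eq_div_iff (by linarith) (by linarith)]; ring
  rw [h2] at h1
  calc deriv φ y * (y - x) ≤ (φ y - φ x) / (y - x) * (y - x) :=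
        mul_le_mul_of_nonneg_right h1 hxy'.le
    _ = φ y - φ x := by field_simp

lemma auxDerivNonneg (hφconc : ConcaveOn ℝ (Set.Ici 1) φ) (hφmono : MonotoneOn φ (Set.Ici 1))
    (hφdiff : ∀ t, 1 ≤ t → DifferentiableAt ℝ φ t) {a : ℝ} (ha : 1 ≤ a) :
    0 ≤ deriv φ a := by
  have h := auxSlopeLe hφconc hφdiff ha (lt_add_one a)
  have h2 : φ a ≤ φ (a + 1) := hφmono (mem_Ici.mpr ha) (mem_Ici.mpr (by linarith)) (by linarith)
  nlinarith

lemma auxDerivAnti (hφconc : ConcaveOn ℝ (Set.Ici 1) φ)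
    (hφdiff : ∀ t, 1 ≤ t → DifferentiableAt ℝ φ t) {x y : ℝ} (hx : 1 ≤ x) (hxy : x ≤ y) :
    deriv φ y ≤ deriv φ x := by
  rcases eq_or_lt_of_le hxy with rfl | h
  · exact le_refl _
  · have h1 := auxSlopeLe hφconc hφdiff hx h
    have h2 := auxSlopeGe hφconc hφdiff hx h
    have : 0 < y - x := by linarith
    nlinarith

lemma auxLogFTC (hφconc : ConcaveOn ℝ (Set.Ici 1) φ)
    (hφdiff : ∀ t, 1 ≤ t → DifferentiableAt ℝ φ t) (hφpos : ∀ t, 1 ≤ t → 0 < φ t)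
    {x y : ℝ} (hx : 1 ≤ x) (hxy : x ≤ y) :
    Real.log (φ y) - Real.log (φ x) = ∫ s in x..y, deriv φ s * (φ s)⁻¹ := by
  have hsub : uIcc x y ⊆ Ici 1 := by
    rw [uIcc_of_le hxy]; exact fun s hs => le_trans hx hs.1
  have hint : IntervalIntegrable (fun s => deriv φ s * (φ s)⁻¹) volume x y := by
    apply IntervalIntegrable.mul_continuousOn
    · apply AntitoneOn.intervalIntegrable
      intro s hs t ht hst
      exact auxDerivAnti hφconc hφdiff (hsub hs) hst
    · exact ContinuousOn.inv₀ ((auxCont hφdiff).mono hsub)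
        (fun s hs => (hφpos s (hsub hs)).ne')
  have := intervalIntegral.integral_eq_sub_of_hasDerivAt (f := fun t => Real.log (φ t))
    (f' := fun s => deriv φ s * (φ s)⁻¹) (a := x) (b := y) ?_ hint
  · rw [this]
  · intro s hs
    have h1 : 1 ≤ s := hsub hs
    have := ((hφdiff s h1).hasDerivAt).log (hφpos s h1).ne'
    simpa [div_eq_mul_inv] using this

lemma auxLogUB (hφconc : ConcaveOn ℝ (Set.Ici 1) φ)
    (hφdiff : ∀ t, 1 ≤ t → DifferentiableAt ℝ φ t) (hφpos : ∀ t, 1 ≤ t → 0 < φ t)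
    {x y : ℝ} (hx : 1 ≤ x) (hxy : x ≤ y) :
    Real.log (φ y) - Real.log (φ x) ≤ deriv φ x * ∫ s in x..y, (φ s)⁻¹ := by
  rw [auxLogFTC hφconc hφdiff hφpos hx hxy, ← intervalIntegral.integral_const_mul]
  apply intervalIntegral.integral_mono_on hxy
  · apply IntervalIntegrable.mul_continuousOn
    · apply AntitoneOn.intervalIntegrable
      intro s hs t ht hst
      exact auxDerivAnti hφconc hφdiff (le_trans hx (by rw [uIcc_of_le hxy] at hs; exact hs.1)) hst
    · refine ContinuousOn.inv₀ ((auxCont hφdiff).mono ?_) (fun s hs => (hφpos s ?_).ne')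
      · rw [uIcc_of_le hxy]; exact fun s hs => le_trans hx hs.1
      · rw [uIcc_of_le hxy] at hs; exact le_trans hx hs.1
  · exact (auxInt hφdiff hφpos hx hxy).const_mul _
  · intro s hs
    have h1 : 1 ≤ s := le_trans hx hs.1
    exact mul_le_mul_of_nonneg_right (auxDerivAnti hφconc hφdiff hx hs.1)
      (inv_pos.mpr (hφpos s h1)).le

lemma auxLogLB (hφconc : ConcaveOn ℝ (Set.Ici 1) φ)
    (hφdiff : ∀ t, 1 ≤ t → DifferentiableAt ℝ φ t) (hφpos : ∀ t, 1 ≤ t → 0 < φ t)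
    {x y : ℝ} (hx : 1 ≤ x) (hxy : x ≤ y) :
    deriv φ y * ∫ s in x..y, (φ s)⁻¹ ≤ Real.log (φ y) - Real.log (φ x) := by
  rw [auxLogFTC hφconc hφdiff hφpos hx hxy, ← intervalIntegral.integral_const_mul]
  apply intervalIntegral.integral_mono_on hxy
  · exact (auxInt hφdiff hφpos hx hxy).const_mul _
  · apply IntervalIntegrable.mul_continuousOn
    · apply AntitoneOn.intervalIntegrable
      intro s hs t ht hst
      exact auxDerivAnti hφconc hφdiff (le_trans hx (by rw [uIcc_of_le hxy] at hs; exact hs.1)) hst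
    · refine ContinuousOn.inv₀ ((auxCont hφdiff).mono ?_) (fun s hs => (hφpos s ?_).ne')
      · rw [uIcc_of_le hxy]; exact fun s hs => le_trans hx hs.1
      · rw [uIcc_of_le hxy] at hs; exact le_trans hx hs.1
  · intro s hs
    have h1 : 1 ≤ s := le_trans hx hs.1
    exact mul_le_mul_of_nonneg_right (auxDerivAnti hφconc hφdiff h1 hs.2)
      (inv_pos.mpr (hφpos s h1)).le

lemma auxGconc (hφconc : ConcaveOn ℝ (Set.Ici 1) φ)
    (hφdiff : ∀ t, 1 ≤ t → DifferentiableAt ℝ φ t) (hφpos : ∀ t, 1 ≤ t → 0 < φ t)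
    (hH : Tendsto (Hfun φ) atTop atTop) :
    ConcaveOn ℝ (Ici (0:ℝ)) (fun u => Real.log (φ (Hinv φ u))) := by
  apply concaveOn_of_slope_anti_adjacent (convex_Ici 0)
  intro u v w hu hw huv hvw
  have hv : (0:ℝ) ≤ v := le_of_lt (lt_of_le_of_lt hu huv)
  set x := Hinv φ u with hxdef
  set y := Hinv φ v with hydef
  set z := Hinv φ w with hzdef
  obtain ⟨hmx, hequ⟩ := auxInvMem hφdiff hφpos hH hu
  obtain ⟨hmy, heqv⟩ := auxInvMem hφdiff hφpos hH hv
  obtain ⟨hmz, heqw⟩ := auxInvMem hφdiff hφpos hH (hv.trans hvw.le)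
  have hxy : x < y := auxInvStrict hφdiff hφpos hH hu huv
  have hyz : y < z := auxInvStrict hφdiff hφpos hH hv hvw
  have hSu : (∫ s in x..y, (φ s)⁻¹) = v - u := by
    have := auxHsub hφdiff hφpos hmx hxy.le
    rw [hequ, heqv] at this; linarith
  have hSv : (∫ s in y..z, (φ s)⁻¹) = w - v := by
    have := auxHsub hφdiff hφpos hmy hyz.le
    rw [heqv, heqw] at this; linarith
  have h1 : deriv φ y * (v - u) ≤ Real.log (φ y) - Real.log (φ x) := by
    rw [← hSu]; exact auxLogLB hφconc hφdiff hφpos hmx hxy.le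
  have h2 : Real.log (φ z) - Real.log (φ y) ≤ deriv φ y * (w - v) := by
    rw [← hSv]; exact auxLogUB hφconc hφdiff hφpos hmy hyz.le
  have huv' : 0 < v - u := by linarith
  have hvw' : 0 < w - v := by linarith
  rw [div_le_div_iff₀ hvw' huv']
  nlinarith

lemma auxSuperadd (hφconc : ConcaveOn ℝ (Set.Ici 1) φ)
    (hφdiff : ∀ t, 1 ≤ t → DifferentiableAt ℝ φ t) (hφpos : ∀ t, 1 ≤ t → 0 < φ t)
    (hH : Tendsto (Hfun φ) atTop atTop) {a b : ℝ} (ha : 0 ≤ a) (hb : 0 ≤ b) :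
    Real.log (φ (Hinv φ (a + b))) + Real.log (φ (Hinv φ 0)) ≤
      Real.log (φ (Hinv φ a)) + Real.log (φ (Hinv φ b)) := by
  set G := fun u => Real.log (φ (Hinv φ u)) with hG
  have hGc := auxGconc hφconc hφdiff hφpos hH
  rcases eq_or_lt_of_le ha with rfl | ha'
  · simp only [zero_add]; linarith
  rcases eq_or_lt_of_le hb with rfl | hb'
  · simp only [add_zero]; linarith
  have hab : 0 < a + b := by linarith
  have key : ∀ c : ℝ, 0 < c → c < a + b →
      c / (a + b) * G (a + b) + (1 - c / (a + b)) * G 0 ≤ G c := by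
    intro c hc hcab
    have hl : (0:ℝ) ≤ c / (a + b) := by positivity
    have hl2 : (0:ℝ) ≤ 1 - c / (a + b) := by
      rw [sub_nonneg, div_le_one hab]; linarith
    have := hGc.2 (mem_Ici.mpr hab.le) (mem_Ici.mpr (le_refl (0:ℝ))) hl hl2 (by ring)
    have hceq : (c / (a + b)) • (a + b) + (1 - c / (a + b)) • (0:ℝ) = c := by
      field_simp
      simp only [smul_eq_mul, mul_zero, add_zero]; field_simp
    rw [hceq] at this
    simpa [smul_eq_mul] using this
  have hA := key a ha' (by linarith)
  have hB := key b hb' (by linarith)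
  have hsum : a / (a + b) + b / (a + b) = 1 := by field_simp
  show G (a + b) + G 0 ≤ G a + G b
  have e1 : a / (a + b) * G (a + b) + b / (a + b) * G (a + b) = G (a + b) := by
    rw [← add_mul, hsum, one_mul]
  have e2 : (1 - a / (a + b)) * G 0 + (1 - b / (a + b)) * G 0 = G 0 := by
    have : (1 - a / (a + b)) + (1 - b / (a + b)) = 1 := by linarith
    rw [← add_mul, this, one_mul]
  linarith [hA, hB, e1, e2]

lemma auxSubmult (hφconc : ConcaveOn ℝ (Set.Ici 1) φ)
    (hφdiff : ∀ t, 1 ≤ t → DifferentiableAt ℝ φ t) (hφpos : ∀ t, 1 ≤ t → 0 < φ t)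
    (hH : Tendsto (Hfun φ) atTop atTop) {a b : ℝ} (ha : 0 ≤ a) (hb : 0 ≤ b) :
    φ (Hinv φ (a + b)) * φ 1 ≤ φ (Hinv φ a) * φ (Hinv φ b) := by
  have h := auxSuperadd hφconc hφdiff hφpos hH ha hb
  rw [auxInv0 hφdiff hφpos hH] at h
  have hab : 0 < φ (Hinv φ (a + b)) :=
    hφpos _ (auxInvMem hφdiff hφpos hH (by linarith)).1
  have ha' : 0 < φ (Hinv φ a) := hφpos _ (auxInvMem hφdiff hφpos hH ha).1
  have hb' : 0 < φ (Hinv φ b) := hφpos _ (auxInvMem hφdiff hφpos hH hb).1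
  have h1' : 0 < φ 1 := hφpos 1 le_rfl
  rw [← Real.log_mul hab.ne' h1'.ne', ← Real.log_mul ha'.ne' hb'.ne'] at h
  exact (Real.log_le_log_iff (by positivity) (by positivity)).mp h

lemma auxStepR (hφconc : ConcaveOn ℝ (Set.Ici 1) φ) (hφmono : MonotoneOn φ (Set.Ici 1))
    (hφdiff : ∀ t, 1 ≤ t → DifferentiableAt ℝ φ t) (hφpos : ∀ t, 1 ≤ t → 0 < φ t)
    (hH : Tendsto (Hfun φ) atTop atTop) {p q ε : ℝ} (hp : 0 ≤ p) (hpq : p ≤ q) (hε : 0 < ε) :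
    φ (Hinv φ (q + ε)) - φ (Hinv φ q) ≤
      ε * deriv φ (Hinv φ p) * (φ (Hinv φ p) * φ (Hinv φ (q + ε - p)) / φ 1) := by
  have hq : 0 ≤ q := hp.trans hpq
  have hφ1 : 0 < φ 1 := hφpos 1 le_rfl
  set xp := Hinv φ p with hxp
  set y := Hinv φ q with hy
  set z := Hinv φ (q + ε) with hz
  have hmxp : xp ∈ Ici (1:ℝ) := (auxInvMem hφdiff hφpos hH hp).1
  have hmy : y ∈ Ici (1:ℝ) := (auxInvMem hφdiff hφpos hH hq).1
  have hmz : z ∈ Ici (1:ℝ) := (auxInvMem hφdiff hφpos hH (by linarith)).1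
  have hyz : y < z := auxInvStrict hφdiff hφpos hH hq (by linarith)
  have hxpy : xp ≤ y := auxInvMono hφdiff hφpos hH hp hpq
  have h1 : φ z - φ y ≤ deriv φ y * (z - y) := auxSlopeLe hφconc hφdiff hmy hyz
  have h2 : deriv φ y ≤ deriv φ xp := auxDerivAnti hφconc hφdiff hmxp hxpy
  have hd : 0 ≤ deriv φ xp := auxDerivNonneg hφconc hφmono hφdiff hmxp
  have h3 : z - y ≤ ε * φ z := by
    have := auxIncr hφmono hφdiff hφpos hH hq (le_of_lt (by linarith : q < q + ε))
    rw [show q + ε - q = ε by ring] at this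
    exact this
  have h4 : φ z * φ 1 ≤ φ xp * φ (Hinv φ (q + ε - p)) := by
    have := auxSubmult hφconc hφdiff hφpos hH hp (by linarith : (0:ℝ) ≤ q + ε - p)
    rw [show p + (q + ε - p) = q + ε by ring] at this
    exact this
  have h5 : φ z ≤ φ xp * φ (Hinv φ (q + ε - p)) / φ 1 := by
    rw [le_div_iff₀ hφ1]; exact h4
  calc φ z - φ y ≤ deriv φ y * (z - y) := h1
    _ ≤ deriv φ xp * (z - y) := mul_le_mul_of_nonneg_right h2 (by linarith)
    _ ≤ deriv φ xp * (ε * φ z) := mul_le_mul_of_nonneg_left h3 hd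
    _ ≤ deriv φ xp * (ε * (φ xp * φ (Hinv φ (q + ε - p)) / φ 1)) :=
        mul_le_mul_of_nonneg_left (mul_le_mul_of_nonneg_left h5 hε.le) hd
    _ = ε * deriv φ xp * (φ xp * φ (Hinv φ (q + ε - p)) / φ 1) := by ring


end AuxLemmas

/-- Lemma 5.4 (ii): increment estimate for the rate sequence. -/
theorem statement13 (φ : ℝ → ℝ)
    (hφconc : ConcaveOn ℝ (Set.Ici 1) φ)
    (hφmono : MonotoneOn φ (Set.Ici 1))
    (hφdiff : ∀ t, 1 ≤ t → DifferentiableAt ℝ φ t)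
    (hφpos : ∀ t, 1 ≤ t → 0 < φ t)
    (hH : Tendsto (Hfun φ) atTop atTop)
    (εb : ℝ) (hεb : εb ∈ Set.Ioo (0:ℝ) 1) :
    ∀ n m : ℕ, rate φ εb (n + m) - rate φ εb n ≤
      εb * deriv φ (Hinv φ (εb * n)) * rate φ εb n *
        ∑ k ∈ Finset.Icc 1 m, rate φ εb k := by
  obtain ⟨hε, -⟩ := hεb
  have hφ1 : 0 < φ 1 := hφpos 1 le_rfl
  intro n m
  induction m with
  | zero => simp
  | succ m ih =>
    have hp : (0:ℝ) ≤ εb * n := by positivity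
    have hpq : εb * (n:ℝ) ≤ εb * ((n:ℝ) + m) := by
      have : (0:ℝ) ≤ (m:ℝ) := Nat.cast_nonneg m
      nlinarith
    have hstep := auxStepR hφconc hφmono hφdiff hφpos hH (p := εb * n)
      (q := εb * ((n:ℝ) + m)) (ε := εb) hp hpq hε
    have e3 : εb * ((n:ℝ) + m) + εb - εb * n = εb * ((m + 1 : ℕ) : ℝ) := by push_cast; ring
    have e1 : εb * ((n:ℝ) + m) + εb = εb * ((n + (m + 1) : ℕ) : ℝ) := by push_cast; ring
    have e2 : εb * ((n:ℝ) + m) = εb * ((n + m : ℕ) : ℝ) := by push_cast; ring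
    rw [e3, e1, e2] at hstep
    have hone : rate φ εb (n + (m + 1)) - rate φ εb (n + m) ≤
        εb * deriv φ (Hinv φ (εb * n)) * rate φ εb n * rate φ εb (m + 1) := by
      unfold rate
      rw [← sub_div]
      have e4 : εb * deriv φ (Hinv φ (εb * n)) * (φ (Hinv φ (εb * n)) / φ 1) *
          (φ (Hinv φ (εb * (m + 1 : ℕ))) / φ 1) =
          (εb * deriv φ (Hinv φ (εb * n)) *
            (φ (Hinv φ (εb * n)) * φ (Hinv φ (εb * (m + 1 : ℕ))) / φ 1)) / φ 1 := by
        field_simp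
      rw [e4]
      exact div_le_div_of_nonneg_right hstep hφ1.le
    rw [Finset.sum_Icc_succ_top (Nat.one_le_iff_ne_zero.mpr (Nat.succ_ne_zero m))]
    have dist : εb * deriv φ (Hinv φ (εb * n)) * rate φ εb n *
        ((∑ k ∈ Finset.Icc 1 m, rate φ εb k) + rate φ εb (m + 1)) =
        εb * deriv φ (Hinv φ (εb * n)) * rate φ εb n * (∑ k ∈ Finset.Icc 1 m, rate φ εb k) +
        εb * deriv φ (Hinv φ (εb * n)) * rate φ εb n * rate φ εb (m + 1) := by ring
    rw [dist]
    linarith [ih, hone]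
end

section
/- Assume Condition (D) and consider the coupling construction. Then for all (x, x') ∈ X²: E_{x,x',0}[ Σ_{n=0}^{τ−1} φ(V̄(X_n, X'_n)) ] ≤ (1/ε_b) V̄(x, x') + b̄/(ε_b ε_ν), where V̄(x, x') = V(x) + V(x') − 1 and b̄ = 2b_V + ε_b φ(1). -/
open MeasureTheory ProbabilityTheory Filter Set
open scoped ENNReal

lemma concave_aux {φ : ℝ → ℝ} (hconc : ConcaveOn ℝ (Set.Ici 1) φ) {a b : ℝ}
    (ha : 1 ≤ a) (hb : 1 ≤ b) : φ (a + b - 1) + φ 1 ≤ φ a + φ b := by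
  rcases eq_or_lt_of_le ha with h | h
  · rw [← h, show (1:ℝ) + b - 1 = b by ring]; linarith
  rcases eq_or_lt_of_le hb with h' | h'
  · rw [← h', show a + 1 - 1 = a by ring]
  have hd : 0 < a + b - 2 := by linarith
  set lam := (a - 1) / (a + b - 2) with hlam_def
  set mu := (b - 1) / (a + b - 2) with hmu_def
  have hlam : 0 ≤ lam := div_nonneg (by linarith) hd.le
  have hmu : 0 ≤ mu := div_nonneg (by linarith) hd.le
  have hsum : lam + mu = 1 := by rw [hlam_def, hmu_def]; field_simp [hd.ne']; ring
  have hs : (1:ℝ) ≤ a + b - 1 := by linarith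
  have h1 := hconc.2 (Set.mem_Ici.2 hs) (Set.mem_Ici.2 le_rfl) hlam hmu hsum
  have h2 := hconc.2 (Set.mem_Ici.2 hs) (Set.mem_Ici.2 le_rfl) hmu hlam (by linarith)
  have e1 : lam * (a + b - 1) + mu * 1 = a := by rw [hlam_def, hmu_def]; field_simp; ring
  have e2 : mu * (a + b - 1) + lam * 1 = b := by rw [hlam_def, hmu_def]; field_simp; ring
  simp only [smul_eq_mul] at h1 h2
  rw [e1] at h1; rw [e2] at h2
  have h3 : lam * φ (a + b - 1) + mu * φ (a + b - 1) = φ (a + b - 1) := by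
    rw [← add_mul, hsum, one_mul]
  have h4 : lam * φ 1 + mu * φ 1 = φ 1 := by rw [← add_mul, hsum, one_mul]
  linarith [h1, h2, h3, h4]

lemma step_sum {Y : Type*} [MeasurableSpace Y] (P : ℕ → Kernel Y Y)
    (hP : ∀ k, IsMarkovKernel (P k)) (f H : Y → ℝ≥0∞) (hf : Measurable f) (hH : Measurable H)
    (hstep : ∀ k, 1 ≤ k → ∀ y, f y + ∫⁻ z, H z ∂(P k y) ≤ H y) (y0 : Y) :
    ∑' n : ℕ, ∫⁻ y, f y ∂(iterKernel P n y0) ≤ H y0 := by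
  have inst : ∀ n, IsMarkovKernel (iterKernel P n) := by
    intro n
    induction n with
    | zero => exact inferInstanceAs (IsMarkovKernel (Kernel.id : Kernel Y Y))
    | succ n ih =>
      haveI := ih; haveI := hP (n + 1)
      exact inferInstanceAs (IsMarkovKernel ((P (n + 1)).comp (iterKernel P n)))
  have key : ∀ N : ℕ, (∑ n ∈ Finset.range N, ∫⁻ y, f y ∂(iterKernel P n y0)) +
      ∫⁻ y, H y ∂(iterKernel P N y0) ≤ H y0 := by
    intro N
    induction N with
    | zero =>
      simp [iterKernel, Kernel.id_apply, lintegral_dirac' _ hH]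
    | succ N ih =>
      haveI := inst N; haveI := hP (N + 1)
      have hcomp : ∫⁻ y, H y ∂(iterKernel P (N + 1) y0) =
          ∫⁻ y, (∫⁻ z, H z ∂(P (N + 1) y)) ∂(iterKernel P N y0) :=
        Kernel.lintegral_comp (P (N + 1)) (iterKernel P N) y0 hH
      rw [Finset.sum_range_succ, hcomp, add_assoc]
      have h1 : ∫⁻ y, f y ∂(iterKernel P N y0) +
          ∫⁻ y, (∫⁻ z, H z ∂(P (N + 1) y)) ∂(iterKernel P N y0) ≤
          ∫⁻ y, H y ∂(iterKernel P N y0) := by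
        rw [← lintegral_add_left hf]
        exact lintegral_mono fun y => hstep (N + 1) (by omega) y
      exact le_trans (add_le_add le_rfl h1) ih
  rw [ENNReal.tsum_eq_iSup_nat]
  exact iSup_le fun N => le_trans le_self_add (key N)

set_option maxHeartbeats 2000000

/-- Lemma 5.5.  Since the coupling flag is absorbing, the event `{τ > n}` coincides
with `{D_n = false}`, so `E[∑_{n<τ} φ(V̄(X_n,X'_n))] = ∑_n E[φ(V̄(X_n,X'_n)) 1{D_n = false}]`,
each term being an integral against the n-step marginal of the coupling chain. -/
theorem statement14 {X : Type*} [MeasurableSpace X]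
    (P : ℕ → Kernel X X) (hP : ∀ k, IsMarkovKernel (P k))
    (C : Set X) (hC : MeasurableSet C)
    (V : X → ℝ) (hVmeas : Measurable V) (hV1 : ∀ x, 1 ≤ V x)
    (φ : ℝ → ℝ)
    (hφconc : ConcaveOn ℝ (Set.Ici 1) φ)
    (hφmono : MonotoneOn φ (Set.Ici 1))
    (hφdiff : ∀ t, 1 ≤ t → DifferentiableAt ℝ φ t)
    (hφpos : ∀ t, 1 ≤ t → 0 < φ t)
    (hφderiv0 : Tendsto (deriv φ) atTop (nhds 0))
    (ν : ℕ → Measure X) (hν : ∀ k, IsProbabilityMeasure (ν k))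
    (εν εb : ℝ) (hεν : εν ∈ Set.Ioo (0:ℝ) 1) (hεb : εb ∈ Set.Ioo (0:ℝ) 1)
    (bV cV : ℝ)
    (hVint : ∀ k, 1 ≤ k → ∀ x, Integrable V (P k x))
    (hdrift : ∀ k, 1 ≤ k → ∀ x,
      ∫ y, V y ∂(P k x) ≤ V x - φ (V x) + bV * C.indicator 1 x)
    (hminor : ∀ k, 1 ≤ k → ∀ x ∈ C, ∀ A : Set X, MeasurableSet A →
      ENNReal.ofReal εν * ν k A ≤ P k x A)
    (hout : ∀ x ∉ C, bV / (1 - εb) ≤ φ (V x))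
    (hin : ∀ x ∈ C, V x ≤ cV)
    -- the coupling construction (Definition 5.1); the flag `true` indicates coupling:
    (Pbar : ℕ → Kernel ((X × X) × Bool) ((X × X) × Bool))
    (hPbar : ∀ k, IsMarkovKernel (Pbar k))
    (hbar_in : ∀ k, 1 ≤ k → ∀ x x' : X, x ∈ C → x' ∈ C →
      Pbar k ((x, x'), false) =
        ENNReal.ofReal εν • ((ν k).map fun y => ((y, y), true)) +
        ENNReal.ofReal (1 - εν) •
          (((Qmeas P ν εν k x).prod (Qmeas P ν εν k x')).map fun p => (p, false)))
    (hbar_out : ∀ k, 1 ≤ k → ∀ x x' : X, ¬(x ∈ C ∧ x' ∈ C) →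
      Pbar k ((x, x'), false) =
        (((P k x).prod (P k x')).map fun p => (p, false)))
    (hbar_diag : ∀ k, 1 ≤ k → ∀ x : X,
      Pbar k ((x, x), true) = (P k x).map fun y => ((y, y), true))
    (hbar_ne : ∀ k, 1 ≤ k → ∀ x x' : X, x ≠ x' →
      Pbar k ((x, x'), true) = Measure.dirac ((x, x'), true)) :
    ∀ x x' : X,
      ∑' n : ℕ, ∫⁻ s : (X × X) × Bool,
          (if s.2 = false then ENNReal.ofReal (φ (V s.1.1 + V s.1.2 - 1)) else 0)
            ∂(iterKernel Pbar n ((x, x'), false)) ≤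
        ENNReal.ofReal (εb⁻¹ * (V x + V x' - 1) + bbar φ εb bV / (εb * εν)) := by
  intro x x'
  haveI : Nonempty X := ⟨x⟩
  have hεb0 : 0 < εb := hεb.1
  have hεb1 : εb < 1 := hεb.2
  have hεν0 : 0 < εν := hεν.1
  have hεν1 : εν < 1 := hεν.2
  have hu0 : 0 < εb⁻¹ := inv_pos.2 hεb0
  have huεb : εb⁻¹ * εb = 1 := inv_mul_cancel₀ (ne_of_gt hεb0)
  have hu1 : 1 ≤ εb⁻¹ := by nlinarith
  set u : ℝ := εb⁻¹ with hu_def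
  set K : ℝ := bbar φ εb bV / (εb * εν) with hK_def
  have hφ1 : 0 < φ 1 := hφpos 1 le_rfl
  -- positivity of bV
  have hbV : 0 < bV := by
    have hbdd : BddBelow (Set.range V) := ⟨1, by rintro _ ⟨y, rfl⟩; exact hV1 y⟩
    set m := ⨅ y, V y with hm_def
    have hmle : ∀ y, m ≤ V y := fun y => ciInf_le hbdd y
    obtain ⟨y, hy⟩ : ∃ y, V y < m + φ 1 :=
      exists_lt_of_ciInf_lt (by linarith [hmle x] : ⨅ y, V y < m + φ 1)
    haveI := hP 1
    have hmean : m ≤ ∫ z, V z ∂(P 1 y) := by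
      have h := integral_mono (integrable_const m) (hVint 1 le_rfl y) (fun z => hmle z)
      simpa using h
    have h2 := hdrift 1 le_rfl y
    have hφVy : φ 1 ≤ φ (V y) := hφmono (Set.mem_Ici.2 le_rfl) (Set.mem_Ici.2 (hV1 y)) (hV1 y)
    by_cases hyC : y ∈ C
    · have hind : C.indicator (1 : X → ℝ) y = 1 := by
        rw [Set.indicator_of_mem hyC]; rfl
      rw [hind] at h2; linarith
    · have hind : C.indicator (1 : X → ℝ) y = 0 := Set.indicator_of_notMem hyC 1
      rw [hind] at h2; linarith
  have hK0 : 0 ≤ K := by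
    rw [hK_def, bbar]
    apply div_nonneg (by nlinarith) (by positivity)
  have hKeq : εν * K = 2 * bV * u + φ 1 := by
    rw [hK_def, hu_def, bbar]
    field_simp
  -- measurability
  have hVV : Measurable fun p : X × X => V p.1 + V p.2 - 1 :=
    ((hVmeas.comp measurable_fst).add (hVmeas.comp measurable_snd)).sub measurable_const
  have hψmono : Monotone (fun t : ℝ => φ (max t 1)) := fun s t hst =>
    hφmono (Set.mem_Ici.2 (le_max_right _ _)) (Set.mem_Ici.2 (le_max_right _ _))
      (max_le_max hst le_rfl)
  have hψmeas : Measurable (fun t : ℝ => φ (max t 1)) := hψmono.measurable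
  have hBmeas : MeasurableSet {s : (X × X) × Bool | s.2 = false} := by
    have : {s : (X × X) × Bool | s.2 = false} = Prod.snd ⁻¹' {false} := rfl
    rw [this]
    exact measurable_snd (measurableSet_singleton false)
  set f : (X × X) × Bool → ENNReal := fun s =>
    if s.2 = false then ENNReal.ofReal (φ (max (V s.1.1 + V s.1.2 - 1) 1)) else 0 with hf_def
  set H : (X × X) × Bool → ENNReal := fun s =>
    if s.2 = false then ENNReal.ofReal (u * (V s.1.1 + V s.1.2 - 1) + K) else 0 with hH_def
  have hfmeas : Measurable f := by
    apply Measurable.ite hBmeas _ measurable_const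
    exact ENNReal.measurable_ofReal.comp (hψmeas.comp (hVV.comp measurable_fst))
  have hHmeas : Measurable H := by
    apply Measurable.ite hBmeas _ measurable_const
    exact ENNReal.measurable_ofReal.comp ((measurable_const.mul (hVV.comp measurable_fst)).add
      measurable_const)
  set gV : X → ENNReal := fun w => ENNReal.ofReal (V w - 1) with hgV_def
  have hgVmeas : Measurable gV := ENNReal.measurable_ofReal.comp (hVmeas.sub measurable_const)
  -- drift facts
  have hIdrift : ∀ k, 1 ≤ k → ∀ z : X,
      0 ≤ ∫ w, (V w - 1) ∂(P k z) ∧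
      (∫ w, (V w - 1) ∂(P k z)) ≤ V z - φ (V z) + bV * C.indicator 1 z - 1 ∧
      ∫⁻ w, gV w ∂(P k z) = ENNReal.ofReal (∫ w, (V w - 1) ∂(P k z)) := by
    intro k hk z
    haveI := hP k
    have hint : Integrable (fun w => V w - 1) (P k z) := (hVint k hk z).sub (integrable_const 1)
    refine ⟨integral_nonneg fun w => sub_nonneg.2 (hV1 w), ?_, ?_⟩
    · have := hdrift k hk z
      rw [integral_sub (hVint k hk z) (integrable_const 1)]
      simp only [integral_const, measure_univ, ENNReal.toReal_one, probReal_univ, one_smul, smul_eq_mul, mul_one]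
      linarith
    · exact (ofReal_integral_eq_lintegral_ofReal hint
        (Filter.Eventually.of_forall fun w => sub_nonneg.2 (hV1 w))).symm
  -- product integral identity
  have hcoord1 : ∀ (μ μ' : Measure X), IsProbabilityMeasure μ → IsProbabilityMeasure μ' →
      ∀ g : X → ENNReal, Measurable g →
      (∫⁻ p : X × X, g p.1 ∂(μ.prod μ')) = ∫⁻ w, g w ∂μ := by
    intro μ μ' h h' g hg
    haveI := h; haveI := h'
    rw [lintegral_prod (fun p : X × X => g p.1) (hg.comp measurable_fst).aemeasurable]
    simp [lintegral_const, measure_univ, mul_one]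
  have hcoord2 : ∀ (μ μ' : Measure X), IsProbabilityMeasure μ → IsProbabilityMeasure μ' →
      ∀ g : X → ENNReal, Measurable g →
      (∫⁻ p : X × X, g p.2 ∂(μ.prod μ')) = ∫⁻ w, g w ∂μ' := by
    intro μ μ' h h' g hg
    haveI := h; haveI := h'
    rw [lintegral_prod (fun p : X × X => g p.2) (hg.comp measurable_snd).aemeasurable]
    simp [lintegral_const, measure_univ, mul_one]
  have huK0 : (0:ℝ) ≤ u + K := by positivity
  have hprod : ∀ (μ μ' : Measure X), IsProbabilityMeasure μ → IsProbabilityMeasure μ' →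
      (∫⁻ p : X × X, ENNReal.ofReal (u * (V p.1 + V p.2 - 1) + K) ∂(μ.prod μ')) =
      ENNReal.ofReal u * ∫⁻ w, gV w ∂μ + ENNReal.ofReal u * ∫⁻ w, gV w ∂μ' +
        ENNReal.ofReal (u + K) := by
    intro μ μ' h h'
    haveI := h; haveI := h'
    have hpt : ∀ p : X × X, ENNReal.ofReal (u * (V p.1 + V p.2 - 1) + K) =
        ENNReal.ofReal u * gV p.1 + ENNReal.ofReal u * gV p.2 + ENNReal.ofReal (u + K) := by
      intro p
      rw [hgV_def]
      rw [← ENNReal.ofReal_mul hu0.le, ← ENNReal.ofReal_mul hu0.le,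
        ← ENNReal.ofReal_add (by nlinarith [hV1 p.1] : (0:ℝ) ≤ u * (V p.1 - 1))
          (by nlinarith [hV1 p.2] : (0:ℝ) ≤ u * (V p.2 - 1)),
        ← ENNReal.ofReal_add (by nlinarith [hV1 p.1, hV1 p.2]) huK0]
      congr 1
      ring
    simp_rw [hpt]
    rw [lintegral_add_right _ measurable_const,
      lintegral_add_left (show Measurable fun p : X × X => ENNReal.ofReal u * gV p.1 from
        (hgVmeas.comp measurable_fst).const_mul _),
      lintegral_const_mul _ (show Measurable fun p : X × X => gV p.1 from
        hgVmeas.comp measurable_fst),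
      lintegral_const_mul _ (show Measurable fun p : X × X => gV p.2 from
        hgVmeas.comp measurable_snd),
      lintegral_const, measure_univ, mul_one,
      hcoord1 μ μ' h h' gV hgVmeas, hcoord2 μ μ' h h' gV hgVmeas]
  -- Q measure facts
  have hw0 : ENNReal.ofReal (1 - εν) ≠ 0 := by
    simp only [ne_eq, ENNReal.ofReal_eq_zero, not_le]
    linarith
  have hwtop : ENNReal.ofReal (1 - εν) ≠ ⊤ := ENNReal.ofReal_ne_top
  have hQle : ∀ k, 1 ≤ k → ∀ z ∈ C, (ENNReal.ofReal εν • ν k) ≤ P k z := by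
    intro k hk z hz
    refine Measure.le_intro fun A hA _ => ?_
    simpa using hminor k hk z hz A hA
  have hQsmul : ∀ k, 1 ≤ k → ∀ z, ENNReal.ofReal (1 - εν) • Qmeas P ν εν k z =
      P k z - ENNReal.ofReal εν • ν k := by
    intro k hk z
    rw [Qmeas, smul_smul, ENNReal.mul_inv_cancel hw0 hwtop, one_smul]
  have hQprob : ∀ k, 1 ≤ k → ∀ z ∈ C, IsProbabilityMeasure (Qmeas P ν εν k z) := by
    intro k hk z hz
    haveI := hP k; haveI := hν k
    haveI : IsFiniteMeasure (ENNReal.ofReal εν • ν k) := by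
      constructor
      rw [Measure.smul_apply, smul_eq_mul, measure_univ, mul_one]
      exact ENNReal.ofReal_lt_top
    constructor
    have hsub : (P k z - ENNReal.ofReal εν • ν k) Set.univ = ENNReal.ofReal (1 - εν) := by
      rw [Measure.sub_apply MeasurableSet.univ (hQle k hk z hz), Measure.smul_apply,
        smul_eq_mul, measure_univ, measure_univ, mul_one,
        ENNReal.ofReal_sub 1 hεν0.le, ENNReal.ofReal_one]
    rw [Qmeas, Measure.smul_apply, hsub, smul_eq_mul, ENNReal.inv_mul_cancel hw0 hwtop]
  have hQlint : ∀ k, (1 ≤ k) → ∀ z, z ∈ C → ∀ g : X → ENNReal, Measurable g →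
      ENNReal.ofReal (1 - εν) * ∫⁻ w, g w ∂(Qmeas P ν εν k z) ≤ ∫⁻ w, g w ∂(P k z) := by
    intro k hk z hz g hg
    rw [← smul_eq_mul, ← lintegral_smul_measure, hQsmul k hk z]
    exact lintegral_mono' Measure.sub_le le_rfl
  have hdiagmeas : Measurable fun y : X => ((y, y), true) :=
    (measurable_id.prodMk measurable_id).prodMk measurable_const
  have hpairmeas : Measurable fun p : X × X => (p, false) :=
    measurable_id.prodMk measurable_const
  have hstep : ∀ k, 1 ≤ k → ∀ s : (X × X) × Bool, f s + ∫⁻ z, H z ∂(Pbar k s) ≤ H s := by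
    rintro k hk ⟨⟨a, b⟩, d⟩
    haveI := hP k; haveI := hν k
    cases d with
    | true =>
      have hint0 : ∫⁻ z, H z ∂(Pbar k ((a, b), true)) = 0 := by
        by_cases hab : a = b
        · subst hab
          rw [hbar_diag k hk a, lintegral_map hHmeas hdiagmeas]
          simp [hH_def]
        · rw [hbar_ne k hk a b hab, lintegral_dirac' _ hHmeas]
          simp [hH_def]
      rw [hint0]
      simp [hf_def, hH_def]
    | false =>
      have hVab : (1:ℝ) ≤ V a + V b - 1 := by linarith [hV1 a, hV1 b]
      have hfval : f ((a, b), false) = ENNReal.ofReal (φ (V a + V b - 1)) := by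
        simp [hf_def, max_eq_left hVab]
      have hHval : H ((a, b), false) = ENNReal.ofReal (u * (V a + V b - 1) + K) := by
        simp [hH_def]
      have hφab : 0 < φ (V a + V b - 1) := hφpos _ hVab
      have hφa : 0 < φ (V a) := hφpos _ (hV1 a)
      have hφb : 0 < φ (V b) := hφpos _ (hV1 b)
      have hcav := concave_aux hφconc (hV1 a) (hV1 b)
      obtain ⟨hIa0, hIale, hIalin⟩ := hIdrift k hk a
      obtain ⟨hIb0, hIble, hIblin⟩ := hIdrift k hk b
      have hp2 : φ (V a) + φ (V b) ≤ u * (φ (V a) + φ (V b)) :=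
        le_mul_of_one_le_left (by positivity) hu1
      have hεu : (0:ℝ) ≤ εν * u := by positivity
      by_cases hab : a ∈ C ∧ b ∈ C
      · haveI hQa := hQprob k hk a hab.1
        haveI hQb := hQprob k hk b hab.2
        rw [hbar_in k hk a b hab.1 hab.2, lintegral_add_measure, lintegral_smul_measure,
          lintegral_smul_measure, lintegral_map hHmeas hdiagmeas, lintegral_map hHmeas hpairmeas]
        have e1 : (∫⁻ y, H ((y, y), true) ∂(ν k)) = 0 := by simp [hH_def]
        have e2 : (∫⁻ p : X × X, H (p, false) ∂((Qmeas P ν εν k a).prod (Qmeas P ν εν k b))) =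
            ENNReal.ofReal u * ∫⁻ w, gV w ∂(Qmeas P ν εν k a) +
            ENNReal.ofReal u * ∫⁻ w, gV w ∂(Qmeas P ν εν k b) + ENNReal.ofReal (u + K) := by
          rw [show (fun p : X × X => H (p, false)) =
            fun p => ENNReal.ofReal (u * (V p.1 + V p.2 - 1) + K) from funext fun p => by
              simp [hH_def]]
          exact hprod _ _ hQa hQb
        rw [e1, smul_zero, zero_add, e2, hfval, hHval, smul_eq_mul]
        have hA : ENNReal.ofReal (1 - εν) * ∫⁻ w, gV w ∂(Qmeas P ν εν k a) ≤
            ENNReal.ofReal (∫ w, (V w - 1) ∂(P k a)) := by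
          rw [← hIalin]; exact hQlint k hk a hab.1 gV hgVmeas
        have hB : ENNReal.ofReal (1 - εν) * ∫⁻ w, gV w ∂(Qmeas P ν εν k b) ≤
            ENNReal.ofReal (∫ w, (V w - 1) ∂(P k b)) := by
          rw [← hIblin]; exact hQlint k hk b hab.2 gV hgVmeas
        have key : ENNReal.ofReal (1 - εν) *
            (ENNReal.ofReal u * ∫⁻ w, gV w ∂(Qmeas P ν εν k a) +
             ENNReal.ofReal u * ∫⁻ w, gV w ∂(Qmeas P ν εν k b) + ENNReal.ofReal (u + K)) ≤
            ENNReal.ofReal (u * (∫ w, (V w - 1) ∂(P k a)) +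
              (u * (∫ w, (V w - 1) ∂(P k b)) + (1 - εν) * (u + K))) := by
          have h1 : ENNReal.ofReal (1 - εν) *
              (ENNReal.ofReal u * ∫⁻ w, gV w ∂(Qmeas P ν εν k a) +
               ENNReal.ofReal u * ∫⁻ w, gV w ∂(Qmeas P ν εν k b) + ENNReal.ofReal (u + K)) =
              ENNReal.ofReal u * (ENNReal.ofReal (1 - εν) * ∫⁻ w, gV w ∂(Qmeas P ν εν k a)) +
              (ENNReal.ofReal u * (ENNReal.ofReal (1 - εν) * ∫⁻ w, gV w ∂(Qmeas P ν εν k b)) +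
               ENNReal.ofReal (1 - εν) * ENNReal.ofReal (u + K)) := by ring
          rw [h1, ← ENNReal.ofReal_mul (by linarith : (0:ℝ) ≤ 1 - εν)]
          refine le_trans (add_le_add (mul_le_mul_right hA _)
            (add_le_add (mul_le_mul_right hB _) le_rfl)) (le_of_eq ?_)
          rw [← ENNReal.ofReal_mul hu0.le, ← ENNReal.ofReal_mul hu0.le,
            ← ENNReal.ofReal_add (mul_nonneg hu0.le hIb0)
              (mul_nonneg (by linarith : (0:ℝ) ≤ 1 - εν) huK0),
            ← ENNReal.ofReal_add (mul_nonneg hu0.le hIa0)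
              (add_nonneg (mul_nonneg hu0.le hIb0)
                (mul_nonneg (by linarith : (0:ℝ) ≤ 1 - εν) huK0))]
        refine le_trans (add_le_add le_rfl key) ?_
        rw [← ENNReal.ofReal_add hφab.le (add_nonneg (mul_nonneg hu0.le hIa0)
          (add_nonneg (mul_nonneg hu0.le hIb0)
            (mul_nonneg (by linarith : (0:ℝ) ≤ 1 - εν) huK0)))]
        apply ENNReal.ofReal_le_ofReal
        have hCa : C.indicator (1 : X → ℝ) a = 1 := by rw [Set.indicator_of_mem hab.1]; rfl
        have hCb : C.indicator (1 : X → ℝ) b = 1 := by rw [Set.indicator_of_mem hab.2]; rfl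
        rw [hCa] at hIale; rw [hCb] at hIble
        have m1 : u * (∫ w, (V w - 1) ∂(P k a)) ≤ u * (V a - φ (V a) + bV * 1 - 1) :=
          mul_le_mul_of_nonneg_left hIale hu0.le
        have m2 : u * (∫ w, (V w - 1) ∂(P k b)) ≤ u * (V b - φ (V b) + bV * 1 - 1) :=
          mul_le_mul_of_nonneg_left hIble hu0.le
        nlinarith [m1, m2, hp2, hεu, hcav, hKeq]
      · rw [hbar_out k hk a b hab, lintegral_map hHmeas hpairmeas]
        have e2 : (∫⁻ p : X × X, H (p, false) ∂((P k a).prod (P k b))) =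
            ENNReal.ofReal u * ∫⁻ w, gV w ∂(P k a) +
            ENNReal.ofReal u * ∫⁻ w, gV w ∂(P k b) + ENNReal.ofReal (u + K) := by
          rw [show (fun p : X × X => H (p, false)) =
            fun p => ENNReal.ofReal (u * (V p.1 + V p.2 - 1) + K) from funext fun p => by
              simp [hH_def]]
          exact hprod _ _ inferInstance inferInstance
        rw [e2, hIalin, hIblin, hfval, hHval,
          ← ENNReal.ofReal_mul hu0.le, ← ENNReal.ofReal_mul hu0.le,
          ← ENNReal.ofReal_add (mul_nonneg hu0.le hIa0) (mul_nonneg hu0.le hIb0),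
          ← ENNReal.ofReal_add (add_nonneg (mul_nonneg hu0.le hIa0)
            (mul_nonneg hu0.le hIb0)) huK0,
          ← ENNReal.ofReal_add hφab.le (add_nonneg (add_nonneg (mul_nonneg hu0.le hIa0)
            (mul_nonneg hu0.le hIb0)) huK0)]
        apply ENNReal.ofReal_le_ofReal
        have houtb : ∀ z, z ∉ C → u * bV ≤ u * φ (V z) - φ (V z) := by
          intro z hz
          have hb' : bV ≤ (1 - εb) * φ (V z) := by
            have h6 := hout z hz
            rw [div_le_iff₀ (by linarith : (0:ℝ) < 1 - εb)] at h6
            linarith [h6]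
          have h4 : u * bV ≤ u * ((1 - εb) * φ (V z)) := mul_le_mul_of_nonneg_left hb' hu0.le
          have h5 : u * ((1 - εb) * φ (V z)) = u * φ (V z) - φ (V z) := by
            have h7 : u * ((1 - εb) * φ (V z)) = u * φ (V z) - u * εb * φ (V z) := by ring
            rw [h7, huεb, one_mul]
          linarith
        have hpa : φ (V a) ≤ u * φ (V a) := le_mul_of_one_le_left hφa.le hu1
        have hpb : φ (V b) ≤ u * φ (V b) := le_mul_of_one_le_left hφb.le hu1
        by_cases haC : a ∈ C
        · have hbC : b ∉ C := fun hbC => hab ⟨haC, hbC⟩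
          have hCa : C.indicator (1 : X → ℝ) a = 1 := by rw [Set.indicator_of_mem haC]; rfl
          have hCb : C.indicator (1 : X → ℝ) b = 0 := Set.indicator_of_notMem hbC 1
          rw [hCa] at hIale; rw [hCb] at hIble
          have m1 : u * (∫ w, (V w - 1) ∂(P k a)) ≤ u * (V a - φ (V a) + bV * 1 - 1) :=
            mul_le_mul_of_nonneg_left hIale hu0.le
          have m2 : u * (∫ w, (V w - 1) ∂(P k b)) ≤ u * (V b - φ (V b) + bV * 0 - 1) :=
            mul_le_mul_of_nonneg_left hIble hu0.le
          linarith [m1, m2, houtb b hbC, hpa, hcav, hφ1]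
        · have hCa : C.indicator (1 : X → ℝ) a = 0 := Set.indicator_of_notMem haC 1
          rw [hCa] at hIale
          have m1 : u * (∫ w, (V w - 1) ∂(P k a)) ≤ u * (V a - φ (V a) + bV * 0 - 1) :=
            mul_le_mul_of_nonneg_left hIale hu0.le
          by_cases hbC : b ∈ C
          · have hCb : C.indicator (1 : X → ℝ) b = 1 := by rw [Set.indicator_of_mem hbC]; rfl
            rw [hCb] at hIble
            have m2 : u * (∫ w, (V w - 1) ∂(P k b)) ≤ u * (V b - φ (V b) + bV * 1 - 1) :=
              mul_le_mul_of_nonneg_left hIble hu0.le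
            linarith [m1, m2, houtb a haC, hpb, hcav, hφ1]
          · have hCb : C.indicator (1 : X → ℝ) b = 0 := Set.indicator_of_notMem hbC 1
            rw [hCb] at hIble
            have m2 : u * (∫ w, (V w - 1) ∂(P k b)) ≤ u * (V b - φ (V b) + bV * 0 - 1) :=
              mul_le_mul_of_nonneg_left hIble hu0.le
            linarith [m1, m2, hp2, hcav, hφ1]
  -- conclusion
  have hgoalfun : (fun s : (X × X) × Bool =>
      if s.2 = false then ENNReal.ofReal (φ (V s.1.1 + V s.1.2 - 1)) else 0) = f := by
    funext s
    rcases s with ⟨⟨a, b⟩, d⟩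
    cases d
    · simp [hf_def, max_eq_left (show (1:ℝ) ≤ V a + V b - 1 by linarith [hV1 a, hV1 b])]
    · simp [hf_def]
  refine le_trans (le_of_eq (tsum_congr fun n => ?_))
    (le_trans (step_sum Pbar hPbar f H hfmeas hHmeas hstep ((x, x'), false)) (le_of_eq ?_))
  · rw [hgoalfun]
  · simp [hH_def]
end

section
/- Let (X_n)_{n≥0} be a stochastic process on a measurable space (X, 𝓑(X)) adapted to the filtration 𝓕_n = σ(X_0, …, X_n). Suppose (Z_n)_{n≥0} is a non-negative 𝓕_n-adapted process, (f_n)_{n≥0} and (s_n)_{n≥0} are sequences of non-negative measurable functions on X, and E[Z_{n+1} | 𝓕_n] ≤ Z_n − f_n(X_n) + s_n(X_n) almost surely for all n ≥ 0. Then for any initial condition X_0 = x and any 𝓕_n-stopping time τ: E_x[ Σ_{k=0}^{τ−1} f_k(X_k) ] ≤ Z_0(x) + E_x[ Σ_{k=0}^{τ−1} s_k(X_k) ]. -/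
open MeasureTheory Filter Set

/-- Proposition A.1 (comparison theorem, Meyn–Tweedie Prop. 11.3.2, stated for
inhomogeneous chains / general adapted processes). -/
theorem statement17 {Ω : Type*} {X : Type*} [MeasurableSpace X]
    {m : MeasurableSpace Ω} (μ : Measure Ω) [IsProbabilityMeasure μ]
    (𝓕 : Filtration ℕ m)
    (Xp : ℕ → Ω → X) (hXadapted : ∀ n, Measurable[𝓕 n] (Xp n))
    (Z : ℕ → Ω → ℝ) (hZadapted : ∀ n, Measurable[𝓕 n] (Z n))
    (hZnonneg : ∀ n ω, 0 ≤ Z n ω) (hZint : ∀ n, Integrable (Z n) μ)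
    (f s : ℕ → X → ℝ)
    (hfmeas : ∀ n, Measurable (f n)) (hsmeas : ∀ n, Measurable (s n))
    (hfnonneg : ∀ n x, 0 ≤ f n x) (hsnonneg : ∀ n x, 0 ≤ s n x)
    (hcomp : ∀ n : ℕ,
      μ[Z (n + 1)|𝓕 n] ≤ᵐ[μ] fun ω => Z n ω - f n (Xp n ω) + s n (Xp n ω))
    (τ : Ω → ℕ∞) (hτ : ∀ n : ℕ, MeasurableSet[𝓕 n] {ω | τ ω ≤ n}) :
    ∫⁻ ω, ∑' k : ℕ,
        (if (k : ℕ∞) < τ ω then ENNReal.ofReal (f k (Xp k ω)) else 0) ∂μ ≤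
      (∫⁻ ω, ENNReal.ofReal (Z 0 ω) ∂μ) +
        ∫⁻ ω, ∑' k : ℕ,
          (if (k : ℕ∞) < τ ω then ENNReal.ofReal (s k (Xp k ω)) else 0) ∂μ := by
  classical
  set A : ℕ → Set Ω := fun k => {ω | (k : ℕ∞) < τ ω} with hAdef
  have hAF : ∀ k, MeasurableSet[𝓕 k] (A k) := by
    intro k
    have : A k = {ω | τ ω ≤ (k : ℕ∞)}ᶜ := by
      ext ω; simp [hAdef, not_le]
    rw [this]; exact (hτ k).compl
  have hAm : ∀ k, MeasurableSet (A k) := fun k => 𝓕.le k _ (hAF k)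
  have hAmono : ∀ k, A (k + 1) ⊆ A k := by
    intro k ω hω
    have h1 : ((k : ℕ) : ℕ∞) < ((k + 1 : ℕ) : ℕ∞) := by exact_mod_cast Nat.lt_succ_self k
    exact lt_trans h1 hω
  have hXm : ∀ k, Measurable (Xp k) := fun k => (hXadapted k).mono (𝓕.le k) le_rfl
  have hZm : ∀ k, Measurable (Z k) := fun k => (hZadapted k).mono (𝓕.le k) le_rfl
  set F : ℕ → ENNReal := fun k => ∫⁻ ω in A k, ENNReal.ofReal (f k (Xp k ω)) ∂μ with hF
  set S : ℕ → ENNReal := fun k => ∫⁻ ω in A k, ENNReal.ofReal (s k (Xp k ω)) ∂μ with hS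
  set B : ℕ → ENNReal := fun k => ∫⁻ ω in A k, ENNReal.ofReal (Z k ω) ∂μ with hB
  -- key one-step inequality
  have key : ∀ k, F k + B (k + 1) ≤ B k + S k := by
    intro k
    have hBsucc : B (k + 1) ≤ ∫⁻ ω in A k, ENNReal.ofReal (Z (k + 1) ω) ∂μ :=
      lintegral_mono_set (hAmono k)
    refine le_trans (add_le_add_right hBsucc _) ?_
    by_cases hSk : S k = ⊤
    · simp [hSk]
    -- s k ∘ Xp k is integrable on A k
    have hsae : IntegrableOn (fun ω => s k (Xp k ω)) (A k) μ := by
      constructor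
      · exact ((hsmeas k).comp (hXm k)).aestronglyMeasurable
      · rw [hasFiniteIntegral_iff_ofReal (ae_of_all _ fun ω => hsnonneg k (Xp k ω))]
        exact lt_top_iff_ne_top.2 hSk
    have hcond_int : IntegrableOn (μ[Z (k + 1)|𝓕 k]) (A k) μ :=
      integrable_condExp.integrableOn
    have hZk_int : IntegrableOn (Z k) (A k) μ := (hZint k).integrableOn
    -- a.e. bound restricted
    have hcomp' : (fun ω => f k (Xp k ω)) ≤ᵐ[μ.restrict (A k)]
        fun ω => Z k ω + s k (Xp k ω) - (μ[Z (k + 1)|𝓕 k]) ω := by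
      filter_upwards [ae_restrict_of_ae (hcomp k)] with ω hω
      linarith [hω]
    -- f k ∘ Xp k integrable on A k
    have hfae : IntegrableOn (fun ω => f k (Xp k ω)) (A k) μ := by
      refine Integrable.mono' ((hZk_int.add hsae).sub hcond_int)
        ((hfmeas k).comp (hXm k)).aestronglyMeasurable ?_
      filter_upwards [hcomp'] with ω hω
      rw [Real.norm_of_nonneg (hfnonneg k (Xp k ω))]
      exact hω
    -- conditional expectation identity on A k
    have hce : ∫ ω in A k, Z (k + 1) ω ∂μ = ∫ ω in A k, (μ[Z (k + 1)|𝓕 k]) ω ∂μ :=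
      (setIntegral_condExp (𝓕.le k) (hZint (k + 1)) (hAF k)).symm
    -- real inequality
    have hreal : ∫ ω in A k, f k (Xp k ω) ∂μ + ∫ ω in A k, Z (k + 1) ω ∂μ ≤
        ∫ ω in A k, Z k ω ∂μ + ∫ ω in A k, s k (Xp k ω) ∂μ := by
      rw [hce, ← integral_add hfae hcond_int, ← integral_add hZk_int hsae]
      refine integral_mono_ae (hfae.add hcond_int) (hZk_int.add hsae) ?_
      filter_upwards [hcomp'] with ω hω
      show f k (Xp k ω) + (μ[Z (k + 1)|𝓕 k]) ω ≤ Z k ω + s k (Xp k ω)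
      linarith [hω]
    -- convert back to lintegrals
    have e1 : F k = ENNReal.ofReal (∫ ω in A k, f k (Xp k ω) ∂μ) :=
      (ofReal_integral_eq_lintegral_ofReal hfae
        (ae_of_all _ fun ω => hfnonneg k (Xp k ω))).symm
    have e2 : ∫⁻ ω in A k, ENNReal.ofReal (Z (k + 1) ω) ∂μ =
        ENNReal.ofReal (∫ ω in A k, Z (k + 1) ω ∂μ) :=
      (ofReal_integral_eq_lintegral_ofReal (hZint (k + 1)).integrableOn
        (ae_of_all _ fun ω => hZnonneg (k + 1) ω)).symm
    have e3 : B k = ENNReal.ofReal (∫ ω in A k, Z k ω ∂μ) :=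
      (ofReal_integral_eq_lintegral_ofReal hZk_int
        (ae_of_all _ fun ω => hZnonneg k ω)).symm
    have e4 : S k = ENNReal.ofReal (∫ ω in A k, s k (Xp k ω) ∂μ) :=
      (ofReal_integral_eq_lintegral_ofReal hsae
        (ae_of_all _ fun ω => hsnonneg k (Xp k ω))).symm
    rw [e1, e2, e3, e4, ← ENNReal.ofReal_add
        (integral_nonneg fun ω => hfnonneg k (Xp k ω))
        (integral_nonneg fun ω => hZnonneg (k + 1) ω),
      ← ENNReal.ofReal_add
        (integral_nonneg fun ω => hZnonneg k ω)
        (integral_nonneg fun ω => hsnonneg k (Xp k ω))]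
    exact ENNReal.ofReal_le_ofReal hreal
  -- induction: partial sums
  have hpart : ∀ N, (∑ k ∈ Finset.range N, F k) + B N ≤ B 0 + ∑ k ∈ Finset.range N, S k := by
    intro N
    induction N with
    | zero => simp
    | succ N ih =>
      rw [Finset.sum_range_succ, Finset.sum_range_succ]
      calc (∑ k ∈ Finset.range N, F k) + F N + B (N + 1)
          = (∑ k ∈ Finset.range N, F k) + (F N + B (N + 1)) := by ring
        _ ≤ (∑ k ∈ Finset.range N, F k) + (B N + S N) := add_le_add_right (key N) _
        _ = ((∑ k ∈ Finset.range N, F k) + B N) + S N := by ring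
        _ ≤ (B 0 + ∑ k ∈ Finset.range N, S k) + S N := add_le_add_left ih _
        _ = B 0 + ((∑ k ∈ Finset.range N, S k) + S N) := by ring
  have htsumF : ∑' k, F k ≤ B 0 + ∑' k, S k := by
    rw [ENNReal.tsum_eq_iSup_sum]
    refine iSup_le fun sfin => ?_
    obtain ⟨N, hN⟩ := sfin.exists_nat_subset_range
    calc ∑ k ∈ sfin, F k ≤ ∑ k ∈ Finset.range N, F k :=
          Finset.sum_le_sum_of_subset hN
      _ ≤ (∑ k ∈ Finset.range N, F k) + B N := le_add_self.trans_eq (add_comm _ _)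
      _ ≤ B 0 + ∑ k ∈ Finset.range N, S k := hpart N
      _ ≤ B 0 + ∑' k, S k := add_le_add_right (ENNReal.sum_le_tsum _) _
  -- rewrite the goal
  have hind : ∀ (g : ℕ → X → ℝ) (k : ℕ) (ω : Ω),
      (if (k : ℕ∞) < τ ω then ENNReal.ofReal (g k (Xp k ω)) else 0) =
        (A k).indicator (fun ω => ENNReal.ofReal (g k (Xp k ω))) ω := by
    intro g k ω
    by_cases h : (k : ℕ∞) < τ ω <;> simp [Set.indicator_apply, hAdef, h]
  have hgoalF : ∫⁻ ω, ∑' k : ℕ,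
      (if (k : ℕ∞) < τ ω then ENNReal.ofReal (f k (Xp k ω)) else 0) ∂μ = ∑' k, F k := by
    have hmF : ∀ k, AEMeasurable (fun ω => (A k).indicator
        (fun ω' => ENNReal.ofReal (f k (Xp k ω'))) ω) μ := fun k =>
      (Measurable.indicator (by exact ((hfmeas k).comp (hXm k)).ennreal_ofReal) (hAm k)).aemeasurable
    simp_rw [hind f]
    rw [lintegral_tsum hmF]
    exact tsum_congr fun k => lintegral_indicator (hAm k) _
  have hgoalS : ∫⁻ ω, ∑' k : ℕ,
      (if (k : ℕ∞) < τ ω then ENNReal.ofReal (s k (Xp k ω)) else 0) ∂μ = ∑' k, S k := by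
    have hmS : ∀ k, AEMeasurable (fun ω => (A k).indicator
        (fun ω' => ENNReal.ofReal (s k (Xp k ω'))) ω) μ := fun k =>
      (Measurable.indicator (by exact ((hsmeas k).comp (hXm k)).ennreal_ofReal) (hAm k)).aemeasurable
    simp_rw [hind s]
    rw [lintegral_tsum hmS]
    exact tsum_congr fun k => lintegral_indicator (hAm k) _
  rw [hgoalF, hgoalS]
  refine htsumF.trans (add_le_add_left ?_ _)
  exact setLIntegral_le_lintegral _ _
end
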